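/- arXiv:2603.15144 — 8 statements merged into one kernel-verified Lean document; each statement's English description precedes it below -/
import Mathlib

section
/- Let f : ℝ^d → ℝ be differentiable with L-Lipschitz gradient (L ≥ 0), attaining its infimum f* = inf f > −∞, and satisfying the Polyak–Łojasiewicz condition with parameter μ > 0: 2μ(f(x) − f*) ≤ ‖∇f(x)‖² for all x. Let x ∈ ℝ^d, g ∈ ℝ^d, γ > 0, and x' = x − γ·g. Then f(x') − f* ≤ (1 − γμ)·(f(x) − f*) − (1/(2γ) − L/2)·‖x' − x‖² + (γ/2)·‖g − ∇f(x)‖². -/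
open Set

lemma fderiv_apply_eq_inner {d : ℕ} (f : EuclideanSpace ℝ (Fin d) → ℝ)
    (hdiff : Differentiable ℝ f) (p v : EuclideanSpace ℝ (Fin d)) :
    fderiv ℝ f p v = inner ℝ (gradient f p) v := by
  have h := (hdiff p).hasGradientAt
  rw [hasGradientAt_iff_hasFDerivAt] at h
  rw [h.fderiv]
  simp [InnerProductSpace.toDual_apply_apply]

lemma descent {d : ℕ} (f : EuclideanSpace ℝ (Fin d) → ℝ) (L : ℝ) (hL : 0 ≤ L)
    (hdiff : Differentiable ℝ f)
    (hlip : ∀ x y, ‖gradient f x - gradient f y‖ ≤ L * ‖x - y‖)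
    (x v : EuclideanSpace ℝ (Fin d)) :
    f (x + v) ≤ f x + inner ℝ (gradient f x) v + L / 2 * ‖v‖ ^ 2 := by
  set h : ℝ → ℝ := fun t => f (x + t • v) - t * inner ℝ (gradient f x) v - L / 2 * t ^ 2 * ‖v‖ ^ 2
    with hh
  have hc : ∀ t : ℝ, HasDerivAt (fun s : ℝ => x + s • v) v t := by
    intro t
    simpa using ((hasDerivAt_id t).smul_const v).const_add x
  have hd : ∀ t : ℝ, HasDerivAt h
      ((inner ℝ (gradient f (x + t • v)) v : ℝ) - inner ℝ (gradient f x) v - L * t * ‖v‖ ^ 2) t := by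
    intro t
    have h1 : HasDerivAt (fun s : ℝ => f (x + s • v)) (fderiv ℝ f (x + t • v) v) t :=
      (hdiff (x + t • v)).hasFDerivAt.comp_hasDerivAt t (hc t)
    rw [fderiv_apply_eq_inner f hdiff] at h1
    have h2 : HasDerivAt (fun s : ℝ => s * (inner ℝ (gradient f x) v : ℝ))
        (inner ℝ (gradient f x) v) t := by
      simpa using (hasDerivAt_id t).mul_const (inner ℝ (gradient f x) v : ℝ)
    have h3 : HasDerivAt (fun s : ℝ => L / 2 * s ^ 2 * ‖v‖ ^ 2) (L * t * ‖v‖ ^ 2) t := by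
      have := ((hasDerivAt_pow 2 t).const_mul (L / 2)).mul_const (‖v‖ ^ 2)
      refine this.congr_deriv ?_
      push_cast
      ring
    exact (h1.sub h2).sub h3
  have hdiffh : Differentiable ℝ h := fun t => (hd t).differentiableAt
  have hanti : AntitoneOn h (Icc (0:ℝ) 1) := by
    apply antitoneOn_of_deriv_nonpos (convex_Icc 0 1) hdiffh.continuous.continuousOn
      hdiffh.differentiableOn
    intro t ht
    rw [interior_Icc] at ht
    rw [(hd t).deriv]
    have key : (inner ℝ (gradient f (x + t • v)) v : ℝ) - inner ℝ (gradient f x) v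
        ≤ L * t * ‖v‖ ^ 2 := by
      calc (inner ℝ (gradient f (x + t • v)) v : ℝ) - inner ℝ (gradient f x) v
          = inner ℝ (gradient f (x + t • v) - gradient f x) v := by
            rw [inner_sub_left]
        _ ≤ ‖gradient f (x + t • v) - gradient f x‖ * ‖v‖ := real_inner_le_norm _ _
        _ ≤ (L * ‖(x + t • v) - x‖) * ‖v‖ := by
            gcongr; exact hlip _ _
        _ = L * t * ‖v‖ ^ 2 := by
            rw [add_sub_cancel_left, norm_smul, Real.norm_eq_abs,
              abs_of_pos ht.1]
            ring
    linarith
  have h10 : h 1 ≤ h 0 := hanti (left_mem_Icc.2 zero_le_one) (right_mem_Icc.2 zero_le_one)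
    zero_le_one
  simp only [hh, one_smul, zero_smul, add_zero, one_pow, one_mul] at h10
  nlinarith [h10]

/-- Descent lemma under the Polyak–Łojasiewicz condition for one inexact-gradient
step `x' = x - γ • g` of an `L`-smooth function attaining its infimum `fstar`. -/
theorem stmt_1 {d : ℕ} (f : EuclideanSpace ℝ (Fin d) → ℝ) (L μ fstar : ℝ)
    (hL : 0 ≤ L) (hμ : 0 < μ)
    (hdiff : Differentiable ℝ f)
    (hlip : ∀ x y, ‖gradient f x - gradient f y‖ ≤ L * ‖x - y‖)
    (hbound : ∀ y, fstar ≤ f y) (hatt : ∃ y, f y = fstar)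
    (hPL : ∀ y, 2 * μ * (f y - fstar) ≤ ‖gradient f y‖ ^ 2)
    (x g : EuclideanSpace ℝ (Fin d)) (γ : ℝ) (hγ : 0 < γ)
    (x' : EuclideanSpace ℝ (Fin d)) (hx' : x' = x - γ • g) :
    f x' - fstar ≤ (1 - γ * μ) * (f x - fstar)
      - (1 / (2 * γ) - L / 2) * ‖x' - x‖ ^ 2
      + (γ / 2) * ‖g - gradient f x‖ ^ 2 := by
  have hv : x' = x + (-(γ • g)) := by rw [hx']; abel
  have hdesc := descent f L hL hdiff hlip x (-(γ • g))
  rw [← hv] at hdesc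
  have hinner : (inner ℝ (gradient f x) (-(γ • g)) : ℝ) = -γ * inner ℝ (gradient f x) g := by
    rw [inner_neg_right, inner_smul_right]; ring
  have hnv : ‖x' - x‖ = γ * ‖g‖ := by
    rw [hx']
    simp [norm_smul, abs_of_pos hγ]
  have hnv2 : ‖-(γ • g)‖ = γ * ‖g‖ := by
    rw [norm_neg, norm_smul, Real.norm_eq_abs, abs_of_pos hγ]
  have hpoly : ‖g - gradient f x‖ ^ 2
      = ‖g‖ ^ 2 - 2 * inner ℝ (gradient f x) g + ‖gradient f x‖ ^ 2 := by
    rw [norm_sub_sq_real, real_inner_comm]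
  have hPLx := hPL x
  have hb := hbound x
  rw [hinner, hnv2] at hdesc
  rw [hnv]
  have hfe : 1 / (2 * γ) * (γ * ‖g‖) ^ 2 = γ / 2 * ‖g‖ ^ 2 := by
    field_simp
  have hpl2 : γ / 2 * (2 * μ * (f x - fstar)) ≤ γ / 2 * ‖gradient f x‖ ^ 2 :=
    mul_le_mul_of_nonneg_left hPLx (by positivity)
  nlinarith [hpl2, hfe, hdesc, hpoly]
end

section
/- Let E be a real inner product space, let 𝒢 be a finite index set with |𝒢| = G ≥ 1, and let κ ≥ 0, ζ ≥ 0. Suppose for each i ∈ 𝒢 the vector g_i ∈ E decomposes as g_i = c_i + p_i + m_i + h_i + w, where c_i, p_i, m_i, h_i ∈ E and w ∈ E is a single common vector, and suppose (1/G)·Σ_{i∈𝒢} ‖h_i‖² ≤ ζ². Let ḡ = (1/G)·Σ_{i∈𝒢} g_i, and let a ∈ E satisfy the robust-aggregation inequality ‖a − ḡ‖² ≤ (κ/G)·Σ_{i∈𝒢} ‖g_i − ḡ‖². Then ‖a − ḡ‖² ≤ (8κ(G−1)/G²)·Σ_{i∈𝒢}(‖c_i‖² + ‖p_i‖² + ‖m_i‖²)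 + (8κ(G−1)/G)·ζ². -/
open scoped BigOperators

/-- Robust aggregation error bound: if each honest vector decomposes as
`g i = c i + p i + m i + h i + w` with heterogeneity `(1/G)·Σ‖h i‖² ≤ ζ²`,
and `a` satisfies the `(B,κ)`-robust aggregation inequality at the honest set,
then `‖a - ḡ‖²` is controlled by the compression, momentum deviations and
heterogeneity. -/
theorem stmt_3 {E : Type*} [NormedAddCommGroup E] [InnerProductSpace ℝ E]
    {ι : Type*} [Fintype ι] (hG : 1 ≤ Fintype.card ι)
    (κ ζ : ℝ) (hκ : 0 ≤ κ) (hζ : 0 ≤ ζ)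
    (g c p m h : ι → E) (w : E)
    (hdecomp : ∀ i, g i = c i + p i + m i + h i + w)
    (hhet : (1 / (Fintype.card ι : ℝ)) * ∑ i, ‖h i‖ ^ 2 ≤ ζ ^ 2)
    (a ghat : E)
    (hghat : ghat = (1 / (Fintype.card ι : ℝ)) • ∑ i, g i)
    (hrobust : ‖a - ghat‖ ^ 2 ≤ (κ / (Fintype.card ι : ℝ)) * ∑ i, ‖g i - ghat‖ ^ 2) :
    ‖a - ghat‖ ^ 2 ≤
      (8 * κ * ((Fintype.card ι : ℝ) - 1) / (Fintype.card ι : ℝ) ^ 2) *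
        ∑ i, (‖c i‖ ^ 2 + ‖p i‖ ^ 2 + ‖m i‖ ^ 2)
      + (8 * κ * ((Fintype.card ι : ℝ) - 1) / (Fintype.card ι : ℝ)) * ζ ^ 2 := by
  classical
  set n : ℝ := (Fintype.card ι : ℝ) with hn
  have hn1 : (1:ℝ) ≤ n := by rw [hn]; exact_mod_cast hG
  have hnpos : (0:ℝ) < n := by linarith
  have hn0 : n ≠ 0 := ne_of_gt hnpos
  set d : ι → E := fun i => c i + p i + m i + h i with hd
  set db : E := (1 / n) • ∑ i, d i with hdb
  have hgd : ∀ i, g i - ghat = d i - db := by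
    intro i
    have h1 : ∑ i, g i = (∑ i, d i) + (Fintype.card ι) • w := by
      simp [hdecomp, Finset.sum_add_distrib, hd, add_assoc]
    have h2 : (1 / n) • ((Fintype.card ι) • w) = w := by
      rw [← Nat.cast_smul_eq_nsmul ℝ, smul_smul, ← hn]
      rw [one_div, inv_mul_cancel₀ hn0, one_smul]
    rw [hghat, h1, smul_add, h2, hdecomp i]
    show c i + p i + m i + h i + w - ((1/n) • ∑ i, d i + w) = d i - db
    rw [← hdb, hd]
    show c i + p i + m i + h i + w - (db + w) = c i + p i + m i + h i - db
    abel
  have hsum_d : ∑ i, d i = n • db := by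
    rw [hdb, smul_smul]
    rw [mul_one_div, div_self hn0, one_smul]
  -- variance bound
  have hvar : ∑ i, ‖d i - db‖^2 ≤ ∑ i, ‖d i‖^2 := by
    have expand : ∀ i, ‖d i - db‖^2 = ‖d i‖^2 - 2 * (inner ℝ (d i) db : ℝ) + ‖db‖^2 :=
      fun i => norm_sub_sq_real _ _
    have hsum : ∑ i, ‖d i - db‖^2
        = (∑ i, ‖d i‖^2) - 2 * (inner ℝ (∑ i, d i) db : ℝ) + n * ‖db‖^2 := by
      simp only [expand]
      rw [Finset.sum_add_distrib, Finset.sum_sub_distrib, Finset.sum_const,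
        Finset.card_univ]
      have e1 : ∑ x : ι, (2:ℝ) * (inner ℝ (d x) db : ℝ)
          = 2 * (inner ℝ (∑ i, d i) db : ℝ) := by
        rw [← Finset.mul_sum, sum_inner]
      have e2 : (Fintype.card ι) • ‖db‖^2 = n * ‖db‖^2 := by
        rw [nsmul_eq_mul, hn]
      rw [e1, e2]
    have hin : (inner ℝ ((n:ℝ) • db) db : ℝ) = n * ‖db‖^2 := by
      rw [real_inner_smul_left, real_inner_self_eq_norm_sq]
    rw [hsum, hsum_d, hin]
    nlinarith [mul_nonneg (le_of_lt hnpos) (sq_nonneg ‖db‖)]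
  have hdle : ∀ i, ‖d i‖^2 ≤ 4 * (‖c i‖^2 + ‖p i‖^2 + ‖m i‖^2 + ‖h i‖^2) := by
    intro i
    have t1 : ‖d i‖ ≤ ‖c i‖ + ‖p i‖ + ‖m i‖ + ‖h i‖ := by
      rw [hd]
      calc ‖c i + p i + m i + h i‖ ≤ ‖c i + p i + m i‖ + ‖h i‖ := norm_add_le _ _
        _ ≤ ‖c i + p i‖ + ‖m i‖ + ‖h i‖ := by gcongr; exact norm_add_le _ _
        _ ≤ ‖c i‖ + ‖p i‖ + ‖m i‖ + ‖h i‖ := by gcongr; exact norm_add_le _ _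
    nlinarith [norm_nonneg (d i), norm_nonneg (c i), norm_nonneg (p i),
      norm_nonneg (m i), norm_nonneg (h i), sq_nonneg (‖c i‖ - ‖p i‖),
      sq_nonneg (‖c i‖ - ‖m i‖), sq_nonneg (‖c i‖ - ‖h i‖),
      sq_nonneg (‖p i‖ - ‖m i‖), sq_nonneg (‖p i‖ - ‖h i‖),
      sq_nonneg (‖m i‖ - ‖h i‖)]
  set T1 : ℝ := ∑ i, (‖c i‖^2 + ‖p i‖^2 + ‖m i‖^2) with hT1
  set Sh : ℝ := ∑ i, ‖h i‖^2 with hSh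
  have hT1nn : 0 ≤ T1 := by positivity
  have hShnn : 0 ≤ Sh := by positivity
  have hS : ∑ i, ‖g i - ghat‖^2 ≤ 8 * (n - 1) / n * (T1 + Sh) := by
    have hT : ∑ i, ‖g i - ghat‖^2 ≤ 4 * (T1 + Sh) := by
      calc ∑ i, ‖g i - ghat‖^2 = ∑ i, ‖d i - db‖^2 := by simp [hgd]
        _ ≤ ∑ i, ‖d i‖^2 := hvar
        _ ≤ ∑ i, 4 * (‖c i‖^2 + ‖p i‖^2 + ‖m i‖^2 + ‖h i‖^2) :=
            Finset.sum_le_sum (fun i _ => hdle i)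
        _ = 4 * (T1 + Sh) := by
            rw [hT1, hSh, ← Finset.sum_add_distrib, Finset.mul_sum]
    by_cases h2 : (2:ℝ) ≤ n
    · have hco : (4:ℝ) ≤ 8 * (n-1)/n := by
        rw [le_div_iff₀ hnpos]; linarith
      calc ∑ i, ‖g i - ghat‖^2 ≤ 4 * (T1 + Sh) := hT
        _ ≤ 8 * (n-1)/n * (T1 + Sh) :=
            mul_le_mul_of_nonneg_right hco (by linarith)
    · -- n = 1
      have hc2 : Fintype.card ι < 2 := by
        by_contra hc
        push_neg at hc
        have : (2:ℝ) ≤ n := by rw [hn]; exact_mod_cast hc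
        exact h2 this
      have hcard : Fintype.card ι = 1 := by omega
      obtain ⟨x, hx⟩ := Fintype.card_eq_one_iff.mp hcard
      have hsg : ∑ i, g i = g x := by
        have : ∀ i : ι, g i = g x := fun i => by rw [hx i]
        rw [Finset.sum_congr rfl (fun i _ => this i), Finset.sum_const,
          Finset.card_univ, hcard, one_smul]
      have hone : n = 1 := by rw [hn, hcard]; norm_num
      have hghx : ghat = g x := by
        rw [hghat, hsg, hone]; norm_num
      have hzero : ∑ i, ‖g i - ghat‖^2 = 0 := by
        apply Finset.sum_eq_zero
        intro i _
        rw [hx i, hghx, sub_self, norm_zero]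
        norm_num
      rw [hzero, hone]
      norm_num
  -- combine
  have hh : Sh ≤ n * ζ^2 := by
    have := mul_le_mul_of_nonneg_left hhet (le_of_lt hnpos)
    have e : n * (1 / n * Sh) = Sh := by field_simp
    linarith [e ▸ this]
  have hc : (0:ℝ) ≤ 8 * κ * (n - 1) / n^2 := by
    apply div_nonneg _ (by positivity)
    have : (0:ℝ) ≤ n - 1 := by linarith
    positivity
  have key : (κ/n) * (8 * (n-1)/n * (T1 + Sh))
      = (8 * κ * (n - 1) / n^2) * T1 + (8 * κ * (n - 1) / n^2) * Sh := by
    field_simp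
  have step2 : (8 * κ * (n - 1) / n^2) * Sh ≤ (8 * κ * (n - 1) / n) * ζ^2 := by
    calc (8 * κ * (n - 1) / n^2) * Sh ≤ (8 * κ * (n - 1) / n^2) * (n * ζ^2) :=
          mul_le_mul_of_nonneg_left hh hc
      _ = (8 * κ * (n - 1) / n) * ζ^2 := by field_simp
  calc ‖a - ghat‖^2 ≤ (κ / n) * ∑ i, ‖g i - ghat‖^2 := hrobust
    _ ≤ (κ / n) * (8 * (n-1)/n * (T1 + Sh)) :=
        mul_le_mul_of_nonneg_left hS (by positivity)
    _ = (8 * κ * (n - 1) / n^2) * T1 + (8 * κ * (n - 1) / n^2) * Sh := key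
    _ ≤ (8 * κ * (n - 1) / n^2) * T1 + (8 * κ * (n - 1) / n) * ζ^2 := by linarith
end

section
/- Let E be a real inner product space, let 𝒢 be a finite index set with |𝒢| = G ≥ 1, and let κ ≥ 0, ζ ≥ 0. For each i ∈ 𝒢 let g_i, u_i, v_i, q_i ∈ E and set c_i = g_i − u_i, p_i = u_i − v_i, m_i = v_i − q_i, ḡ = (1/G)·Σ_{i∈𝒢} g_i, v̄ = (1/G)·Σ_{i∈𝒢} v_i, q̄ = (1/G)·Σ_{i∈𝒢} q_i. Assume the heterogeneity bound (1/G)·Σ_{i∈𝒢} ‖q_i − q̄‖² ≤ ζ², and let a ∈ E satisfy ‖a − ḡ‖² ≤ (κ/G)·Σ_{i∈𝒢} ‖g_i − ḡ‖². Then ‖a − q̄‖² ≤ (4(8κ+1)/G)·Σ_{i∈𝒢}‖c_i‖² + (4(8κ+1)/G)·Σ_{i∈𝒢}‖p_i‖² + (32κ/G)·Σ_{i∈𝒢}‖m_i‖² + 4·‖v̄ − q̄‖² + 32κ·ζ². -/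
open scoped BigOperators

private lemma sq2' {E : Type*} [NormedAddCommGroup E] (x y : E) :
    ‖x + y‖ ^ 2 ≤ 2 * ‖x‖ ^ 2 + 2 * ‖y‖ ^ 2 := by
  have h := norm_add_le x y
  nlinarith [sq_nonneg (‖x‖ - ‖y‖), norm_nonneg x, norm_nonneg y, norm_nonneg (x + y)]

private lemma sq4' {E : Type*} [NormedAddCommGroup E] (x y z w : E) :
    ‖x + y + z + w‖ ^ 2 ≤ 4 * (‖x‖ ^ 2 + ‖y‖ ^ 2 + ‖z‖ ^ 2 + ‖w‖ ^ 2) := by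
  have h0 : x + y + z + w = (x + y) + (z + w) := by abel
  rw [h0]
  have h1 := sq2' (x + y) (z + w)
  have h2 := sq2' x y
  have h3 := sq2' z w
  linarith

private lemma jensen' {E : Type*} [NormedAddCommGroup E] [NormedSpace ℝ E]
    {ι : Type*} [Fintype ι] (hn : 0 < (Fintype.card ι : ℝ)) (x : ι → E) :
    ‖(1 / (Fintype.card ι : ℝ)) • ∑ i, x i‖ ^ 2 ≤
      (1 / (Fintype.card ι : ℝ)) * ∑ i, ‖x i‖ ^ 2 := by
  set n : ℝ := (Fintype.card ι : ℝ) with hn'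
  have h1 : ‖∑ i, x i‖ ≤ ∑ i, ‖x i‖ := norm_sum_le _ _
  have h2 : (∑ i, ‖x i‖) ^ 2 ≤ n * ∑ i, ‖x i‖ ^ 2 := by
    have := sq_sum_le_card_mul_sum_sq (s := (Finset.univ : Finset ι)) (f := fun i => ‖x i‖)
    simpa [hn'] using this
  have hns : ‖(1 / n) • ∑ i, x i‖ = (1 / n) * ‖∑ i, x i‖ := by
    rw [norm_smul, Real.norm_eq_abs, abs_of_pos (by positivity : (0:ℝ) < 1 / n)]
  have hkey : ‖∑ i, x i‖ ^ 2 ≤ n * ∑ i, ‖x i‖ ^ 2 :=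
    le_trans (pow_le_pow_left₀ (norm_nonneg _) h1 2) h2
  rw [hns]
  have hinv : (0:ℝ) ≤ 1 / n := by positivity
  calc ((1 / n) * ‖∑ i, x i‖) ^ 2 = (1 / n) * ((1 / n) * ‖∑ i, x i‖ ^ 2) := by ring
    _ ≤ (1 / n) * ((1 / n) * (n * ∑ i, ‖x i‖ ^ 2)) := by
        apply mul_le_mul_of_nonneg_left _ hinv
        exact mul_le_mul_of_nonneg_left hkey hinv
    _ = (1 / n) * ∑ i, ‖x i‖ ^ 2 := by field_simp

private lemma var_min' {E : Type*} [NormedAddCommGroup E] [InnerProductSpace ℝ E]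
    {ι : Type*} [Fintype ι] (hn : 0 < (Fintype.card ι : ℝ)) (x : ι → E) (b μ : E)
    (hμ : μ = (1 / (Fintype.card ι : ℝ)) • ∑ i, x i) :
    ∑ i, ‖x i - μ‖ ^ 2 ≤ ∑ i, ‖x i - b‖ ^ 2 := by
  set n : ℝ := (Fintype.card ι : ℝ) with hn'
  have hzero : ∑ i, (x i - μ) = 0 := by
    rw [Finset.sum_sub_distrib, hμ, Finset.sum_const, Finset.card_univ,
      ← Nat.cast_smul_eq_nsmul ℝ, smul_smul, ← hn', mul_one_div, div_self hn.ne', one_smul,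
      sub_self]
  have key : ∀ i : ι, ‖x i - b‖ ^ 2
      = ‖x i - μ‖ ^ 2 + 2 * (inner ℝ (x i - μ) (μ - b) : ℝ) + ‖μ - b‖ ^ 2 := by
    intro i
    rw [show x i - b = (x i - μ) + (μ - b) by abel, norm_add_sq_real]
  have hsum : ∑ i, ‖x i - b‖ ^ 2
      = ∑ i, ‖x i - μ‖ ^ 2 + 2 * (inner ℝ (∑ i, (x i - μ)) (μ - b) : ℝ)
        + n * ‖μ - b‖ ^ 2 := by
    rw [Finset.sum_congr rfl (fun i _ => key i), Finset.sum_add_distrib,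
      Finset.sum_add_distrib, ← Finset.mul_sum, ← sum_inner, Finset.sum_const,
      Finset.card_univ, nsmul_eq_mul, hn']
  rw [hsum, hzero, inner_zero_left]
  nlinarith [sq_nonneg ‖μ - b‖, hn]

/-- Per-iteration deviation bound between the robustly aggregated vector `a`
and the average honest gradient `qhat`. -/
theorem stmt_4 {E : Type*} [NormedAddCommGroup E] [InnerProductSpace ℝ E]
    {ι : Type*} [Fintype ι] (hG : 1 ≤ Fintype.card ι)
    (κ ζ : ℝ) (hκ : 0 ≤ κ) (hζ : 0 ≤ ζ)
    (g u v q : ι → E) (a : E)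
    (c p m : ι → E)
    (hc : ∀ i, c i = g i - u i) (hp : ∀ i, p i = u i - v i)
    (hm : ∀ i, m i = v i - q i)
    (ghat vhat qhat : E)
    (hghat : ghat = (1 / (Fintype.card ι : ℝ)) • ∑ i, g i)
    (hvhat : vhat = (1 / (Fintype.card ι : ℝ)) • ∑ i, v i)
    (hqhat : qhat = (1 / (Fintype.card ι : ℝ)) • ∑ i, q i)
    (hhet : (1 / (Fintype.card ι : ℝ)) * ∑ i, ‖q i - qhat‖ ^ 2 ≤ ζ ^ 2)
    (hrobust : ‖a - ghat‖ ^ 2 ≤ (κ / (Fintype.card ι : ℝ)) * ∑ i, ‖g i - ghat‖ ^ 2) :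
    ‖a - qhat‖ ^ 2 ≤
      (4 * (8 * κ + 1) / (Fintype.card ι : ℝ)) * ∑ i, ‖c i‖ ^ 2
      + (4 * (8 * κ + 1) / (Fintype.card ι : ℝ)) * ∑ i, ‖p i‖ ^ 2
      + (32 * κ / (Fintype.card ι : ℝ)) * ∑ i, ‖m i‖ ^ 2
      + 4 * ‖vhat - qhat‖ ^ 2 + 32 * κ * ζ ^ 2 := by
  set n : ℝ := (Fintype.card ι : ℝ) with hn'
  have hn : 0 < n := by
    rw [hn']; exact_mod_cast Nat.lt_of_lt_of_le Nat.zero_lt_one hG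
  set cbar : E := (1 / n) • ∑ i, c i with hcbar
  set pbar : E := (1 / n) • ∑ i, p i with hpbar
  -- decomposition
  have hgv : cbar + pbar = ghat - vhat := by
    rw [hcbar, hpbar, hghat, hvhat, ← smul_add, ← smul_sub, ← Finset.sum_add_distrib,
      ← Finset.sum_sub_distrib]
    congr 1
    refine Finset.sum_congr rfl fun i _ => ?_
    rw [hc, hp]; abel
  have hdecomp : a - qhat = (a - ghat) + cbar + pbar + (vhat - qhat) := by
    rw [show a - qhat = (a - ghat) + (ghat - vhat) + (vhat - qhat) from by abel, ← hgv]
    abel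
  have h1 : ‖a - qhat‖ ^ 2 ≤ 4 * (‖a - ghat‖ ^ 2 + ‖cbar‖ ^ 2 + ‖pbar‖ ^ 2
      + ‖vhat - qhat‖ ^ 2) := by
    rw [hdecomp]; exact sq4' _ _ _ _
  -- Jensen bounds
  have hCb : ‖cbar‖ ^ 2 ≤ (1 / n) * ∑ i, ‖c i‖ ^ 2 := jensen' hn c
  have hPb : ‖pbar‖ ^ 2 ≤ (1 / n) * ∑ i, ‖p i‖ ^ 2 := jensen' hn p
  -- variance minimality
  have hvar : ∑ i, ‖g i - ghat‖ ^ 2 ≤ ∑ i, ‖g i - qhat‖ ^ 2 := var_min' hn g qhat ghat hghat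
  -- pointwise four-way bound
  have hpt : ∑ i, ‖g i - qhat‖ ^ 2 ≤ 4 * (∑ i, ‖c i‖ ^ 2 + ∑ i, ‖p i‖ ^ 2
      + ∑ i, ‖m i‖ ^ 2 + ∑ i, ‖q i - qhat‖ ^ 2) := by
    have : ∀ i : ι, ‖g i - qhat‖ ^ 2 ≤ 4 * (‖c i‖ ^ 2 + ‖p i‖ ^ 2 + ‖m i‖ ^ 2
        + ‖q i - qhat‖ ^ 2) := by
      intro i
      have hi : g i - qhat = c i + p i + m i + (q i - qhat) := by
        rw [hc, hp, hm]; abel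
      rw [hi]; exact sq4' _ _ _ _
    calc ∑ i, ‖g i - qhat‖ ^ 2
        ≤ ∑ i, (4 * (‖c i‖ ^ 2 + ‖p i‖ ^ 2 + ‖m i‖ ^ 2 + ‖q i - qhat‖ ^ 2)) :=
          Finset.sum_le_sum fun i _ => this i
      _ = 4 * (∑ i, ‖c i‖ ^ 2 + ∑ i, ‖p i‖ ^ 2 + ∑ i, ‖m i‖ ^ 2
          + ∑ i, ‖q i - qhat‖ ^ 2) := by
          rw [← Finset.mul_sum]
          congr 1
          rw [Finset.sum_add_distrib, Finset.sum_add_distrib, Finset.sum_add_distrib]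
  -- robust aggregation bound
  have hA : ‖a - ghat‖ ^ 2 ≤ (κ / n) * (4 * (∑ i, ‖c i‖ ^ 2 + ∑ i, ‖p i‖ ^ 2
      + ∑ i, ‖m i‖ ^ 2 + ∑ i, ‖q i - qhat‖ ^ 2)) := by
    calc ‖a - ghat‖ ^ 2 ≤ (κ / n) * ∑ i, ‖g i - ghat‖ ^ 2 := hrobust
      _ ≤ (κ / n) * ∑ i, ‖g i - qhat‖ ^ 2 :=
          mul_le_mul_of_nonneg_left hvar (by positivity)
      _ ≤ _ := mul_le_mul_of_nonneg_left hpt (by positivity)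
  -- nonnegativity facts
  have hSc : (0:ℝ) ≤ ∑ i, ‖c i‖ ^ 2 := Finset.sum_nonneg fun i _ => sq_nonneg _
  have hSp : (0:ℝ) ≤ ∑ i, ‖p i‖ ^ 2 := Finset.sum_nonneg fun i _ => sq_nonneg _
  have hSm : (0:ℝ) ≤ ∑ i, ‖m i‖ ^ 2 := Finset.sum_nonneg fun i _ => sq_nonneg _
  have hSq : (0:ℝ) ≤ ∑ i, ‖q i - qhat‖ ^ 2 := Finset.sum_nonneg fun i _ => sq_nonneg _
  have hinv : (0:ℝ) < 1 / n := by positivity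
  have hhet' : κ * ((1 / n) * ∑ i, ‖q i - qhat‖ ^ 2) ≤ κ * ζ ^ 2 :=
    mul_le_mul_of_nonneg_left hhet hκ
  have hk1 : 0 ≤ κ * (1 / n * ∑ i, ‖c i‖ ^ 2) := mul_nonneg hκ (mul_nonneg hinv.le hSc)
  have hk2 : 0 ≤ κ * (1 / n * ∑ i, ‖p i‖ ^ 2) := mul_nonneg hκ (mul_nonneg hinv.le hSp)
  have hk3 : 0 ≤ κ * (1 / n * ∑ i, ‖m i‖ ^ 2) := mul_nonneg hκ (mul_nonneg hinv.le hSm)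
  have hk4 : 0 ≤ κ * ζ ^ 2 := mul_nonneg hκ (sq_nonneg ζ)
  ring_nf at h1 hA hCb hPb hhet' hk1 hk2 hk3 hk4 ⊢
  linarith
end

section
/- Let (Ω, μ) be a probability space and E a real inner product space (e.g. ℝ^d). Let f : E → ℝ be differentiable with L-Lipschitz gradient. Let x, x', v ∈ E, η ∈ (0,1], σ ≥ 0, and let G : Ω → E be Bochner integrable with ∫ G dμ = ∇f(x') and ∫ ‖G − ∇f(x')‖² dμ ≤ σ². Define v'(ω) = (1−η)·v + η·G(ω). Then ∫ ‖v' − ∇f(x')‖² dμ ≤ (1−η)·‖v − ∇f(x)‖² + (L²/η)·‖x' − x‖² + η²·σ². -/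
open MeasureTheory

private lemma aux_young (η A B : ℝ) (hη : 0 < η) (hη1 : η ≤ 1) (hA : 0 ≤ A) (hB : 0 ≤ B) :
    (1 - η) ^ 2 * (A + B) ^ 2 ≤ (1 - η) * A ^ 2 + (1 / η) * B ^ 2 := by
  have h1 : 0 ≤ 1 - η := by linarith
  rw [show (1 - η) * A ^ 2 + (1 / η) * B ^ 2 = (η * ((1 - η) * A ^ 2) + B ^ 2) / η by
    field_simp, le_div_iff₀ hη]
  nlinarith [mul_nonneg h1 (sq_nonneg (η * A - (1 - η) * B)),
    mul_nonneg (show (0:ℝ) ≤ 1 - (1 - η) ^ 2 by nlinarith) (sq_nonneg B)]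

/-- One-step momentum (SGDM) deviation bound: for an unbiased stochastic
gradient `G` at `x'` with variance at most `σ²` and the momentum update
`v' = (1-η)•v + η•G`, the expected squared deviation of `v'` from `∇f(x')`
contracts. -/
theorem stmt_5 {Ω : Type*} [MeasurableSpace Ω] (μ : Measure Ω)
    [IsProbabilityMeasure μ]
    {E : Type*} [NormedAddCommGroup E] [InnerProductSpace ℝ E] [CompleteSpace E]
    (f : E → ℝ) (L : ℝ) (hL : 0 ≤ L)
    (hdiff : Differentiable ℝ f)
    (hlip : ∀ x y, ‖gradient f x - gradient f y‖ ≤ L * ‖x - y‖)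
    (x x' v : E) (η σ : ℝ) (hη : 0 < η) (hη1 : η ≤ 1) (hσ : 0 ≤ σ)
    (G : Ω → E) (hGint : Integrable G μ)
    (hGmean : ∫ ω, G ω ∂μ = gradient f x')
    (hGvar : ∫ ω, ‖G ω - gradient f x'‖ ^ 2 ∂μ ≤ σ ^ 2)
    (v' : Ω → E) (hv' : ∀ ω, v' ω = (1 - η) • v + η • G ω) :
    ∫ ω, ‖v' ω - gradient f x'‖ ^ 2 ∂μ ≤
      (1 - η) * ‖v - gradient f x‖ ^ 2 + (L ^ 2 / η) * ‖x' - x‖ ^ 2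
        + η ^ 2 * σ ^ 2 := by
  set g := gradient f x with hg
  set g' := gradient f x' with hg'
  set a : E := (1 - η) • (v - g') with ha
  have hRHS : (1 - η) ^ 2 * ‖v - g'‖ ^ 2 + η ^ 2 * σ ^ 2 ≤
      (1 - η) * ‖v - g‖ ^ 2 + (L ^ 2 / η) * ‖x' - x‖ ^ 2 + η ^ 2 * σ ^ 2 := by
    have htri : ‖v - g'‖ ≤ ‖v - g‖ + L * ‖x - x'‖ := by
      calc ‖v - g'‖ ≤ ‖v - g‖ + ‖g - g'‖ := by
            simpa using norm_sub_le_norm_sub_add_norm_sub v g g'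
        _ ≤ ‖v - g‖ + L * ‖x - x'‖ := by
            have := hlip x x'; linarith
    have h1 : (1 - η) ^ 2 * ‖v - g'‖ ^ 2 ≤
        (1 - η) ^ 2 * (‖v - g‖ + L * ‖x - x'‖) ^ 2 := by
      apply mul_le_mul_of_nonneg_left _ (sq_nonneg _)
      exact pow_le_pow_left₀ (norm_nonneg _) htri 2
    have h2 := aux_young η ‖v - g‖ (L * ‖x - x'‖) hη hη1 (norm_nonneg _)
      (mul_nonneg hL (norm_nonneg _))
    have h3 : (1 / η) * (L * ‖x - x'‖) ^ 2 = (L ^ 2 / η) * ‖x' - x‖ ^ 2 := by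
      rw [norm_sub_rev x x']; ring
    nlinarith
  have hZint : Integrable (fun ω => G ω - g') μ := hGint.sub (integrable_const _)
  have hZmean : ∫ ω, (G ω - g') ∂μ = 0 := by
    rw [integral_sub hGint (integrable_const _), hGmean, integral_const]
    simp
  have hdecomp : ∀ ω, ‖v' ω - g'‖ ^ 2 =
      ‖a‖ ^ 2 + 2 * (η * inner ℝ a (G ω - g')) + η ^ 2 * ‖G ω - g'‖ ^ 2 := by
    intro ω
    have hw : v' ω - g' = a + η • (G ω - g') := by
      rw [hv' ω, ha]; module
    rw [hw, @norm_add_sq_real, inner_smul_right, norm_smul η (G ω - g'),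
      Real.norm_eq_abs, abs_of_pos hη, mul_pow]
  have hinner : Integrable (fun ω => 2 * (η * inner ℝ a (G ω - g'))) μ :=
    ((hZint.const_inner a).const_mul η).const_mul 2
  by_cases hsq : Integrable (fun ω => ‖G ω - g'‖ ^ 2) μ
  · have hi1 : Integrable (fun ω => ‖a‖ ^ 2 + 2 * (η * inner ℝ a (G ω - g'))) μ :=
      (integrable_const _).add hinner
    have hi2 : Integrable (fun ω => η ^ 2 * ‖G ω - g'‖ ^ 2) μ := hsq.const_mul _
    have hLHS : ∫ ω, ‖v' ω - g'‖ ^ 2 ∂μ =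
        ‖a‖ ^ 2 + η ^ 2 * ∫ ω, ‖G ω - g'‖ ^ 2 ∂μ := by
      simp only [hdecomp]
      rw [integral_add hi1 hi2, integral_add (integrable_const _) hinner,
        integral_const, integral_const_mul, integral_const_mul, integral_inner hZint,
        hZmean, integral_const_mul]
      simp
    rw [hLHS]
    have hnorma : ‖a‖ ^ 2 = (1 - η) ^ 2 * ‖v - g'‖ ^ 2 := by
      rw [ha, norm_smul, Real.norm_eq_abs, mul_pow, sq_abs]
    have hvar : η ^ 2 * ∫ ω, ‖G ω - g'‖ ^ 2 ∂μ ≤ η ^ 2 * σ ^ 2 :=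
      mul_le_mul_of_nonneg_left hGvar (sq_nonneg _)
    linarith [hRHS]
  · have hLHS0 : ∫ ω, ‖v' ω - g'‖ ^ 2 ∂μ = 0 := by
      apply integral_undef
      intro hcon
      apply hsq
      have hd2 : ∀ ω, ‖G ω - g'‖ ^ 2 = (1 / η ^ 2) *
          (‖v' ω - g'‖ ^ 2 - ‖a‖ ^ 2 - 2 * (η * inner ℝ a (G ω - g'))) := by
        intro ω
        rw [hdecomp ω]
        field_simp
        ring
      rw [show (fun ω => ‖G ω - g'‖ ^ 2) = fun ω => (1 / η ^ 2) *
          (‖v' ω - g'‖ ^ 2 - ‖a‖ ^ 2 - 2 * (η * inner ℝ a (G ω - g')))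
        from funext hd2]
      exact (((hcon.sub (integrable_const _)).sub hinner).const_mul _)
    rw [hLHS0]
    have h1 : 0 ≤ (1 - η) * ‖v - g‖ ^ 2 :=
      mul_nonneg (by linarith) (sq_nonneg _)
    have h2 : 0 ≤ (L ^ 2 / η) * ‖x' - x‖ ^ 2 :=
      mul_nonneg (div_nonneg (sq_nonneg _) hη.le) (sq_nonneg _)
    positivity
end

section
/- Let (Ω, μ) be a probability space and E a real inner product space. Let f : E → ℝ be differentiable with L-Lipschitz gradient, let G ≥ 1 be an integer, x, x', v̄ ∈ E, η ∈ (0,1], σ ≥ 0. Let G_1, …, G_G : Ω → E be Bochner-integrable, independent random vectors such that (1/G)·Σ_i ∫ G_i dμ = ∇f(x') and ∫ ‖G_i − ∫G_i dμ‖² dμ ≤ σ² for every i. Define v̄'(ω) = (1−η)·v̄ + η·(1/G)·Σ_i G_i(ω). Then ∫ ‖v̄' − ∇f(x')‖² dμ ≤ (1−η)·‖v̄ − ∇f(x)‖² + (L²/η)·‖x' − x‖² + η²·σ²/G. -/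
open MeasureTheory
open scoped BigOperators RealInnerProductSpace

namespace StmtAux

variable {Ω : Type*} [MeasurableSpace Ω] {μ : Measure Ω} [IsProbabilityMeasure μ]
variable {E : Type*} [NormedAddCommGroup E] [InnerProductSpace ℝ E] [CompleteSpace E]
  [MeasurableSpace E] [BorelSpace E]

theorem integrable_inner_of_indepFun {X Y : Ω → E} (hXY : ProbabilityTheory.IndepFun X Y μ)
    (hX : Integrable X μ) (hY : Integrable Y μ) :
    Integrable (fun ω => ⟪X ω, Y ω⟫) μ := by
  have hn : ProbabilityTheory.IndepFun (fun ω => ‖X ω‖) (fun ω => ‖Y ω‖) μ :=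
    hXY.comp measurable_norm measurable_norm
  have hprod : Integrable ((fun ω => ‖X ω‖) * fun ω => ‖Y ω‖) μ :=
    hn.integrable_mul hX.norm hY.norm
  refine hprod.mono' (hX.1.inner hY.1) ?_
  filter_upwards with ω
  simpa using abs_real_inner_le_norm (X ω) (Y ω)

theorem integral_inner_of_indepFun_sm {X Y : Ω → E}
    (hXm : StronglyMeasurable X) (hYm : StronglyMeasurable Y)
    (hXY : ProbabilityTheory.IndepFun X Y μ) (hX : Integrable X μ) (hY : Integrable Y μ) :
    ∫ ω, ⟪X ω, Y ω⟫ ∂μ = ⟪∫ ω, X ω ∂μ, ∫ ω, Y ω ∂μ⟫ := by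
  classical
  set F : Submodule ℝ E := (Submodule.span ℝ (Set.range X ∪ Set.range Y)).topologicalClosure
    with hFdef
  have hFclosed : IsClosed (F : Set E) := Submodule.isClosed_topologicalClosure _
  haveI : CompleteSpace F := hFclosed.completeSpace_coe
  have hFsep : TopologicalSpace.IsSeparable (F : Set E) := by
    have h1 : TopologicalSpace.IsSeparable (Set.range X ∪ Set.range Y) :=
      hXm.isSeparable_range.union hYm.isSeparable_range
    have h2 := (h1.span (R := ℝ)).closure
    simpa [hFdef, Submodule.topologicalClosure_coe] using h2
  haveI : TopologicalSpace.SeparableSpace F := hFsep.separableSpace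
  haveI : SecondCountableTopology F := UniformSpace.secondCountable_of_separable F
  set P : E →L[ℝ] F := F.orthogonalProjectionOnto with hPdef
  have hXF : ∀ ω, X ω ∈ F := fun ω =>
    Submodule.le_topologicalClosure _ (Submodule.subset_span (Or.inl ⟨ω, rfl⟩))
  have hYF : ∀ ω, Y ω ∈ F := fun ω =>
    Submodule.le_topologicalClosure _ (Submodule.subset_span (Or.inr ⟨ω, rfl⟩))
  have hproj : ∀ z : E, z ∈ F → ((P z : E)) = z := by
    intro z hz
    have := Submodule.orthogonalProjectionOnto_mem_subspace_eq_self (K := F) ⟨z, hz⟩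
    exact congrArg Subtype.val this
  have hPnorm : ∀ z : E, ‖(P z : F)‖ ≤ ‖z‖ := fun z => by
    calc ‖(P z : F)‖ ≤ ‖P‖ * ‖z‖ := P.le_opNorm z
      _ ≤ 1 * ‖z‖ := by
          exact mul_le_mul_of_nonneg_right (Submodule.orthogonalProjectionOnto_norm_le F) (norm_nonneg z)
      _ = ‖z‖ := one_mul _
  have mP : Measurable (fun z : E => P z) := P.continuous.measurable
  have mψ : Measurable (fun p : E × E => (⟪P p.1, P p.2⟫ : ℝ)) :=
    continuous_inner.measurable.comp ((mP.comp measurable_fst).prodMk (mP.comp measurable_snd))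
  have hψsm : StronglyMeasurable (fun p : E × E => (⟪P p.1, P p.2⟫ : ℝ)) := mψ.stronglyMeasurable
  have hXa : AEMeasurable X μ := hXm.measurable.aemeasurable
  have hYa : AEMeasurable Y μ := hYm.measurable.aemeasurable
  set ν₁ : Measure E := μ.map X with hν₁
  set ν₂ : Measure E := μ.map Y with hν₂
  haveI : IsProbabilityMeasure ν₁ := Measure.isProbabilityMeasure_map hXa
  haveI : IsProbabilityMeasure ν₂ := Measure.isProbabilityMeasure_map hYa
  have hmap : μ.map (fun ω => (X ω, Y ω)) = ν₁.prod ν₂ :=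
    (ProbabilityTheory.indepFun_iff_map_prod_eq_prod_map_map hXa hYa).1 hXY
  -- norm integrability on mapped measures
  have hnormsm : StronglyMeasurable (fun z : E => ‖z‖) :=
    measurable_norm.stronglyMeasurable
  have hn1 : Integrable (fun z : E => ‖z‖) ν₁ := by
    rw [hν₁, integrable_map_measure hnormsm.aestronglyMeasurable hXa]
    exact hX.norm
  have hn2 : Integrable (fun z : E => ‖z‖) ν₂ := by
    rw [hν₂, integrable_map_measure hnormsm.aestronglyMeasurable hYa]
    exact hY.norm
  -- ae membership in F
  have hmem1 : ∀ᵐ z ∂ν₁, z ∈ F := by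
    rw [hν₁]
    exact (ae_map_iff hXa hFclosed.measurableSet).2 (Filter.Eventually.of_forall hXF)
  have hmem2 : ∀ᵐ z ∂ν₂, z ∈ F := by
    rw [hν₂]
    exact (ae_map_iff hYa hFclosed.measurableSet).2 (Filter.Eventually.of_forall hYF)
  -- strongly measurable version of id
  have hsmP : StronglyMeasurable (fun z : E => (P z : E)) :=
    stronglyMeasurable_iff_measurable_separable.2
      ⟨measurable_subtype_coe.comp mP,
        hFsep.mono (by rintro _ ⟨z, rfl⟩; exact (P z).2)⟩
  have hid_ae : ∀ {ν : Measure E}, (∀ᵐ z ∂ν, z ∈ F) → AEStronglyMeasurable (fun z : E => z) ν := by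
    intro ν hmem
    refine ⟨fun z => (P z : E), hsmP, ?_⟩
    filter_upwards [hmem] with z hz
    exact (hproj z hz).symm
  have hid1 : Integrable (fun z : E => z) ν₁ :=
    hn1.mono' (hid_ae hmem1) (Filter.Eventually.of_forall fun z => le_refl ‖z‖)
  have hid2 : Integrable (fun z : E => z) ν₂ :=
    hn2.mono' (hid_ae hmem2) (Filter.Eventually.of_forall fun z => le_refl ‖z‖)
  have hPint1 : Integrable (fun z : E => P z) ν₁ := P.integrable_comp hid1
  have hPint2 : Integrable (fun z : E => P z) ν₂ := P.integrable_comp hid2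
  -- pointwise equality of inner products on F
  have hpt : ∀ u v : E, u ∈ F → v ∈ F → (⟪P u, P v⟫ : ℝ) = ⟪u, v⟫ := by
    intro u v hu hv
    rw [Submodule.coe_inner, hproj u hu, hproj v hv]
  -- integrability of ψ on the product
  have hgint : Integrable (fun p : E × E => ‖p.1‖ * ‖p.2‖) (ν₁.prod ν₂) :=
    Integrable.mul_prod hn1 hn2
  have hψint : Integrable (fun p : E × E => (⟪P p.1, P p.2⟫ : ℝ)) (ν₁.prod ν₂) := by
    refine hgint.mono' hψsm.aestronglyMeasurable ?_
    filter_upwards with p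
    calc ‖(⟪P p.1, P p.2⟫ : ℝ)‖ ≤ ‖(P p.1 : F)‖ * ‖(P p.2 : F)‖ := norm_inner_le_norm _ _
      _ ≤ ‖p.1‖ * ‖p.2‖ :=
        mul_le_mul (hPnorm _) (hPnorm _) (norm_nonneg _) (norm_nonneg _)
  -- identify the means
  have hmX : ∫ z, z ∂ν₁ = ∫ ω, X ω ∂μ := by
    rw [hν₁, integral_map hXa (hid_ae hmem1)]
  have hmY : ∫ z, z ∂ν₂ = ∫ ω, Y ω ∂μ := by
    rw [hν₂, integral_map hYa (hid_ae hmem2)]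
  have hmXF : (∫ ω, X ω ∂μ) ∈ F := by
    have h1 : ∫ ω, X ω ∂μ = ∫ ω, ((P (X ω) : F) : E) ∂μ := by
      refine integral_congr_ae (Filter.Eventually.of_forall fun ω => ?_)
      exact (hproj _ (hXF ω)).symm
    have h2 : ∫ ω, ((P (X ω) : F) : E) ∂μ = ((∫ ω, (P (X ω) : F) ∂μ : F) : E) :=
      F.subtypeL.integral_comp_comm (P.integrable_comp hX)
    rw [h1, h2]; exact Submodule.coe_mem _
  have hmYF : (∫ ω, Y ω ∂μ) ∈ F := by
    have h1 : ∫ ω, Y ω ∂μ = ∫ ω, ((P (Y ω) : F) : E) ∂μ := by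
      refine integral_congr_ae (Filter.Eventually.of_forall fun ω => ?_)
      exact (hproj _ (hYF ω)).symm
    have h2 : ∫ ω, ((P (Y ω) : F) : E) ∂μ = ((∫ ω, (P (Y ω) : F) ∂μ : F) : E) :=
      F.subtypeL.integral_comp_comm (P.integrable_comp hY)
    rw [h1, h2]; exact Submodule.coe_mem _
  -- main computation
  calc ∫ ω, ⟪X ω, Y ω⟫ ∂μ
      = ∫ ω, (⟪P (X ω), P (Y ω)⟫ : ℝ) ∂μ := by
        refine integral_congr_ae (Filter.Eventually.of_forall fun ω => ?_)
        exact (hpt _ _ (hXF ω) (hYF ω)).symm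
    _ = ∫ p : E × E, (⟪P p.1, P p.2⟫ : ℝ) ∂(μ.map (fun ω => (X ω, Y ω))) := by
        rw [integral_map (hXa.prodMk hYa) hψsm.aestronglyMeasurable]
    _ = ∫ p : E × E, (⟪P p.1, P p.2⟫ : ℝ) ∂(ν₁.prod ν₂) := by rw [hmap]
    _ = ∫ z₁, ∫ z₂, (⟪P z₁, P z₂⟫ : ℝ) ∂ν₂ ∂ν₁ := integral_prod _ hψint
    _ = ∫ z₁, (⟪P z₁, P (∫ z, z ∂ν₂)⟫ : ℝ) ∂ν₁ := by
        refine integral_congr_ae (Filter.Eventually.of_forall fun z₁ => ?_)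
        rw [← P.integral_comp_comm hid2]
        exact integral_inner hPint2 (P z₁)
    _ = (⟪P (∫ z, z ∂ν₁), P (∫ z, z ∂ν₂)⟫ : ℝ) := by
        have hc : ∀ z₁ : E, (⟪P z₁, P (∫ z, z ∂ν₂)⟫ : ℝ) = ⟪P (∫ z, z ∂ν₂), P z₁⟫ :=
          fun z₁ => real_inner_comm _ _
        rw [integral_congr_ae (Filter.Eventually.of_forall fun z₁ => hc z₁)]
        rw [show (∫ z₁, (⟪P (∫ z, z ∂ν₂), P z₁⟫ : ℝ) ∂ν₁)
            = ⟪P (∫ z, z ∂ν₂), ∫ z₁, P z₁ ∂ν₁⟫ from integral_inner hPint1 _,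
          P.integral_comp_comm hid1]
        exact real_inner_comm _ _
    _ = ⟪∫ ω, X ω ∂μ, ∫ ω, Y ω ∂μ⟫ := by
        rw [hmX, hmY]; exact hpt _ _ hmXF hmYF

theorem integral_inner_of_indepFun {X Y : Ω → E}
    (hXY : ProbabilityTheory.IndepFun X Y μ) (hX : Integrable X μ) (hY : Integrable Y μ) :
    ∫ ω, ⟪X ω, Y ω⟫ ∂μ = ⟪∫ ω, X ω ∂μ, ∫ ω, Y ω ∂μ⟫ := by
  obtain ⟨X', hX'm, hXX'⟩ := hX.1
  obtain ⟨Y', hY'm, hYY'⟩ := hY.1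
  have h1 : ∫ ω, ⟪X ω, Y ω⟫ ∂μ = ∫ ω, ⟪X' ω, Y' ω⟫ ∂μ := by
    refine integral_congr_ae ?_
    filter_upwards [hXX', hYY'] with ω h1 h2
    rw [h1, h2]
  rw [h1, integral_congr_ae hXX', integral_congr_ae hYY']
  exact integral_inner_of_indepFun_sm hX'm hY'm (hXY.congr hXX' hYY')
    (hX.congr hXX') (hY.congr hYY')

theorem key_ineq {η A B : ℝ} (hη : 0 < η) (hη1 : η ≤ 1) (hA : 0 ≤ A) (hB : 0 ≤ B) :
    (1 - η) ^ 2 * (A + B) ^ 2 ≤ (1 - η) * A ^ 2 + B ^ 2 / η := by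
  have h2 : (1 - η) ^ 2 * (A + B) ^ 2 - (1 - η) * A ^ 2 ≤ B ^ 2 / η := by
    rw [le_div_iff₀ hη]
    nlinarith [sq_nonneg (η * A - (1 - η) * B), mul_nonneg hA hB, sq_nonneg (1 - η),
      mul_nonneg (mul_nonneg hη.le (sub_nonneg.2 hη1)) (sq_nonneg (η * A - (1 - η) * B)),
      sq_nonneg B, mul_nonneg hη.le (sq_nonneg B)]
  linarith

end StmtAux


/-- One-step averaged momentum deviation bound for `G` independent workers:
the variance of the averaged unbiased stochastic gradient is `σ²/G`, so the
momentum recursion `v̄' = (1-η)•v̄ + η•(average of Gᵢ)` contracts with noise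
term `η²σ²/G`. -/
theorem stmt_6 {Ω : Type*} [MeasurableSpace Ω] (μ : Measure Ω)
    [IsProbabilityMeasure μ]
    {E : Type*} [NormedAddCommGroup E] [InnerProductSpace ℝ E] [CompleteSpace E]
    [MeasurableSpace E] [BorelSpace E]
    (f : E → ℝ) (L : ℝ) (hL : 0 ≤ L)
    (hdiff : Differentiable ℝ f)
    (hlip : ∀ x y, ‖gradient f x - gradient f y‖ ≤ L * ‖x - y‖)
    (n : ℕ) (hn : 1 ≤ n)
    (x x' vbar : E) (η σ : ℝ) (hη : 0 < η) (hη1 : η ≤ 1) (hσ : 0 ≤ σ)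
    (G : Fin n → Ω → E) (hGint : ∀ i, Integrable (G i) μ)
    (hindep : ProbabilityTheory.iIndepFun G μ)
    (hGmean : (1 / (n : ℝ)) • ∑ i, ∫ ω, G i ω ∂μ = gradient f x')
    (hGvar : ∀ i, ∫ ω, ‖G i ω - ∫ ω', G i ω' ∂μ‖ ^ 2 ∂μ ≤ σ ^ 2)
    (vbar' : Ω → E)
    (hvbar' : ∀ ω, vbar' ω = (1 - η) • vbar + η • ((1 / (n : ℝ)) • ∑ i, G i ω)) :
    ∫ ω, ‖vbar' ω - gradient f x'‖ ^ 2 ∂μ ≤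
      (1 - η) * ‖vbar - gradient f x‖ ^ 2 + (L ^ 2 / η) * ‖x' - x‖ ^ 2
        + η ^ 2 * σ ^ 2 / n := by
  classical
  have hn0 : (0 : ℝ) < n := by exact_mod_cast Nat.lt_of_lt_of_le Nat.zero_lt_one hn
  set g' : E := gradient f x' with hg'
  set g : E := gradient f x with hg
  set m : Fin n → E := fun i => ∫ ω, G i ω ∂μ with hm
  set Y : Fin n → Ω → E := fun i ω => G i ω - m i with hY
  set S : Ω → E := fun ω => ∑ i, Y i ω with hS
  set c : ℝ := η / n with hc
  have hc0 : 0 < c := div_pos hη hn0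
  set a : E := (1 - η) • (vbar - g') with ha
  have hGvar' : ∀ i, ∫ ω, ‖Y i ω‖ ^ 2 ∂μ ≤ σ ^ 2 := fun i => by
    simpa [hY, hm] using hGvar i
  have hGmean' : (1 / (n : ℝ)) • ∑ i, m i = g' := by simpa [hm] using hGmean
  have hYint : ∀ i, Integrable (Y i) μ := fun i => (hGint i).sub (integrable_const _)
  have hYmean : ∀ i, ∫ ω, Y i ω ∂μ = 0 := by
    intro i
    simp [hY, hm, integral_sub (hGint i) (integrable_const _), integral_const, measure_univ]
  have hSint : Integrable S μ := by
    rw [hS]; exact integrable_finset_sum _ fun i _ => hYint i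
  have hSmean : ∫ ω, S ω ∂μ = 0 := by
    simp only [hS]
    rw [integral_finset_sum _ fun i _ => hYint i]
    simp [hYmean]
  have hsplit : ∀ ω, vbar' ω - g' = a + c • S ω := by
    intro ω
    have hsum : (∑ i, G i ω) = S ω + ∑ i, m i := by
      simp only [hS, hY]
      rw [Finset.sum_sub_distrib, sub_add_cancel]
    rw [hvbar' ω, hsum, smul_add, hGmean']
    simp only [ha, hc]
    match_scalars <;> field_simp <;> ring
  have hTexp : ∀ ω, ‖vbar' ω - g'‖ ^ 2
      = ‖a‖ ^ 2 + (2 * c) * ⟪a, S ω⟫ + c ^ 2 * ‖S ω‖ ^ 2 := by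
    intro ω
    have hns : ‖c • S ω‖ ^ 2 = c ^ 2 * ‖S ω‖ ^ 2 := by
      rw [norm_smul c (S ω), Real.norm_eq_abs, mul_pow, sq_abs]
    rw [hsplit ω, norm_add_sq_real, real_inner_smul_right, hns]
    ring
  have hinner_int : Integrable (fun ω => (⟪a, S ω⟫ : ℝ)) μ := hSint.const_inner a
  have hinner_mean : ∫ ω, (⟪a, S ω⟫ : ℝ) ∂μ = 0 := by
    rw [integral_inner hSint, hSmean, inner_zero_right]
  by_cases hTint : Integrable (fun ω => ‖vbar' ω - g'‖ ^ 2) μ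
  case neg =>
    rw [integral_undef hTint]
    have h1 : 0 ≤ (1 - η) * ‖vbar - g‖ ^ 2 :=
      mul_nonneg (by linarith) (sq_nonneg _)
    have h2 : 0 ≤ L ^ 2 / η * ‖x' - x‖ ^ 2 :=
      mul_nonneg (div_nonneg (sq_nonneg _) hη.le) (sq_nonneg _)
    have h3 : 0 ≤ η ^ 2 * σ ^ 2 / (n : ℝ) := by positivity
    linarith
  case pos =>
    have hSsq_int : Integrable (fun ω => ‖S ω‖ ^ 2) μ := by
      have heq : (fun ω => ‖S ω‖ ^ 2)
          = fun ω => (‖vbar' ω - g'‖ ^ 2 - ‖a‖ ^ 2 - (2 * c) * ⟪a, S ω⟫) * (1 / c ^ 2) := by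
        funext ω
        rw [hTexp ω]
        field_simp
        ring
      rw [heq]
      exact ((hTint.sub (integrable_const _)).sub (hinner_int.const_mul _)).mul_const _
    have hYindep : ∀ i j, i ≠ j → ProbabilityTheory.IndepFun (Y i) (Y j) μ := by
      intro i j hij
      have hmi : Measurable (fun z : E => z - m i) :=
        (continuous_id.sub continuous_const).measurable
      have hmj : Measurable (fun z : E => z - m j) :=
        (continuous_id.sub continuous_const).measurable
      exact (hindep.indepFun hij).comp hmi hmj
    have hcross_int : ∀ i j, i ≠ j → Integrable (fun ω => (⟪Y i ω, Y j ω⟫ : ℝ)) μ :=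
      fun i j hij => StmtAux.integrable_inner_of_indepFun (hYindep i j hij) (hYint i) (hYint j)
    have hcross_zero : ∀ i j, i ≠ j → ∫ ω, (⟪Y i ω, Y j ω⟫ : ℝ) ∂μ = 0 := by
      intro i j hij
      rw [StmtAux.integral_inner_of_indepFun (hYindep i j hij) (hYint i) (hYint j), hYmean i,
        inner_zero_left]
    set O : Ω → ℝ := fun ω => ∑ i, ∑ j ∈ Finset.univ.erase i, (⟪Y i ω, Y j ω⟫ : ℝ) with hO
    have hOint : Integrable O μ := by
      rw [hO]
      exact integrable_finset_sum _ fun i _ => integrable_finset_sum _ fun j hj =>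
        hcross_int i j (Finset.mem_erase.1 hj).1.symm
    have hSO : ∀ ω, ‖S ω‖ ^ 2 = (∑ i, ‖Y i ω‖ ^ 2) + O ω := by
      intro ω
      have h1 : (‖S ω‖ ^ 2 : ℝ) = ⟪S ω, S ω⟫ := (real_inner_self_eq_norm_sq _).symm
      have h2 : ∀ i : Fin n, (⟪Y i ω, S ω⟫ : ℝ)
          = ‖Y i ω‖ ^ 2 + ∑ j ∈ Finset.univ.erase i, (⟪Y i ω, Y j ω⟫ : ℝ) := by
        intro i
        have : (⟪Y i ω, S ω⟫ : ℝ) = ∑ j, (⟪Y i ω, Y j ω⟫ : ℝ) := by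
          simp only [hS]; rw [inner_sum]
        rw [this, ← Finset.add_sum_erase _ _ (Finset.mem_univ i), real_inner_self_eq_norm_sq]
      calc (‖S ω‖ ^ 2 : ℝ) = ⟪S ω, S ω⟫ := h1
        _ = ∑ i, (⟪Y i ω, S ω⟫ : ℝ) := by conv_lhs => rw [hS]; rw [sum_inner]
        _ = ∑ i, (‖Y i ω‖ ^ 2 + ∑ j ∈ Finset.univ.erase i, (⟪Y i ω, Y j ω⟫ : ℝ)) :=
            Finset.sum_congr rfl fun i _ => h2 i
        _ = (∑ i, ‖Y i ω‖ ^ 2) + O ω := by rw [Finset.sum_add_distrib, hO]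
    have hD_int : Integrable (fun ω => ∑ i, ‖Y i ω‖ ^ 2) μ := by
      have heq : (fun ω => ∑ i, ‖Y i ω‖ ^ 2) = fun ω => ‖S ω‖ ^ 2 - O ω := by
        funext ω; rw [hSO ω]; ring
      rw [heq]
      exact hSsq_int.sub hOint
    have hYsq_int : ∀ i, Integrable (fun ω => ‖Y i ω‖ ^ 2) μ := by
      intro i
      refine hD_int.mono' ?_ ?_
      · exact ((hYint i).1.norm.mul (hYint i).1.norm).congr
          (Filter.Eventually.of_forall fun ω => (pow_two _).symm)
      · filter_upwards with ω
        rw [Real.norm_eq_abs, abs_of_nonneg (sq_nonneg _)]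
        exact Finset.single_le_sum (f := fun j => ‖Y j ω‖ ^ 2) (fun j _ => sq_nonneg _)
          (Finset.mem_univ i)
    have hOzero : ∫ ω, O ω ∂μ = 0 := by
      simp only [hO]
      rw [integral_finset_sum _ fun i _ => integrable_finset_sum _ fun j hj =>
        hcross_int i j (Finset.mem_erase.1 hj).1.symm]
      refine Finset.sum_eq_zero fun i _ => ?_
      rw [integral_finset_sum _ fun j hj => hcross_int i j (Finset.mem_erase.1 hj).1.symm]
      exact Finset.sum_eq_zero fun j hj => hcross_zero i j (Finset.mem_erase.1 hj).1.symm
    have hSsq_val : ∫ ω, ‖S ω‖ ^ 2 ∂μ ≤ (n : ℝ) * σ ^ 2 := by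
      have h1 : ∫ ω, ‖S ω‖ ^ 2 ∂μ = (∑ i, ∫ ω, ‖Y i ω‖ ^ 2 ∂μ) + ∫ ω, O ω ∂μ := by
        rw [integral_congr_ae (Filter.Eventually.of_forall fun ω => hSO ω),
          integral_add hD_int hOint, integral_finset_sum _ fun i _ => hYsq_int i]
      rw [h1, hOzero, add_zero]
      calc (∑ i, ∫ ω, ‖Y i ω‖ ^ 2 ∂μ) ≤ ∑ _i : Fin n, σ ^ 2 :=
            Finset.sum_le_sum fun i _ => hGvar' i
        _ = (n : ℝ) * σ ^ 2 := by simp [Finset.sum_const, nsmul_eq_mul]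
    have hIT : ∫ ω, ‖vbar' ω - g'‖ ^ 2 ∂μ = ‖a‖ ^ 2 + c ^ 2 * ∫ ω, ‖S ω‖ ^ 2 ∂μ := by
      have hint1 : Integrable (fun ω => ‖a‖ ^ 2 + (2 * c) * ⟪a, S ω⟫) μ :=
        (integrable_const _).add (hinner_int.const_mul _)
      calc ∫ ω, ‖vbar' ω - g'‖ ^ 2 ∂μ
          = ∫ ω, (‖a‖ ^ 2 + (2 * c) * ⟪a, S ω⟫ + c ^ 2 * ‖S ω‖ ^ 2) ∂μ :=
            integral_congr_ae (Filter.Eventually.of_forall fun ω => hTexp ω)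
        _ = (∫ ω, (‖a‖ ^ 2 + (2 * c) * ⟪a, S ω⟫) ∂μ) + ∫ ω, c ^ 2 * ‖S ω‖ ^ 2 ∂μ :=
            integral_add hint1 (hSsq_int.const_mul _)
        _ = ‖a‖ ^ 2 + c ^ 2 * ∫ ω, ‖S ω‖ ^ 2 ∂μ := by
            rw [integral_add (integrable_const _) (hinner_int.const_mul _), integral_const,
              integral_const_mul, integral_const_mul, hinner_mean]
            simp [measure_univ]
    rw [hIT]
    have hnorm_a : ‖a‖ ^ 2 = (1 - η) ^ 2 * ‖vbar - g'‖ ^ 2 := by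
      rw [ha, norm_smul, Real.norm_eq_abs, abs_of_nonneg (by linarith : (0:ℝ) ≤ 1 - η), mul_pow]
    have htri : ‖vbar - g'‖ ≤ ‖vbar - g‖ + ‖g - g'‖ := by
      calc ‖vbar - g'‖ = ‖(vbar - g) + (g - g')‖ := by rw [sub_add_sub_cancel]
        _ ≤ ‖vbar - g‖ + ‖g - g'‖ := norm_add_le _ _
    have hB : ‖g - g'‖ ≤ L * ‖x' - x‖ := by
      have h := hlip x x'
      rw [norm_sub_rev x x'] at h
      simpa [hg, hg'] using h
    have h1 : ‖a‖ ^ 2 ≤ (1 - η) * ‖vbar - g‖ ^ 2 + (L * ‖x' - x‖) ^ 2 / η := by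
      rw [hnorm_a]
      calc (1 - η) ^ 2 * ‖vbar - g'‖ ^ 2
          ≤ (1 - η) ^ 2 * (‖vbar - g‖ + ‖g - g'‖) ^ 2 :=
            mul_le_mul_of_nonneg_left (pow_le_pow_left₀ (norm_nonneg _) htri 2) (sq_nonneg _)
        _ ≤ (1 - η) * ‖vbar - g‖ ^ 2 + ‖g - g'‖ ^ 2 / η :=
            StmtAux.key_ineq hη hη1 (norm_nonneg _) (norm_nonneg _)
        _ ≤ (1 - η) * ‖vbar - g‖ ^ 2 + (L * ‖x' - x‖) ^ 2 / η := by
            gcongr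
    have h2 : c ^ 2 * ∫ ω, ‖S ω‖ ^ 2 ∂μ ≤ η ^ 2 * σ ^ 2 / n := by
      calc c ^ 2 * ∫ ω, ‖S ω‖ ^ 2 ∂μ ≤ c ^ 2 * ((n : ℝ) * σ ^ 2) :=
            mul_le_mul_of_nonneg_left hSsq_val (sq_nonneg _)
        _ = η ^ 2 * σ ^ 2 / n := by rw [hc]; field_simp
    have h3 : (L * ‖x' - x‖) ^ 2 / η = L ^ 2 / η * ‖x' - x‖ ^ 2 := by ring
    linarith
end

section
/- Let (Ω, μ) be a probability space and E a real inner product space. Let f : E → ℝ be differentiable with L-Lipschitz gradient. Let x, x', v, u ∈ E, η ∈ (0,1], σ ≥ 0, and let G : Ω → E be Bochner integrable with ∫ G dμ = ∇f(x') and ∫ ‖G − ∇f(x')‖² dμ ≤ σ². Define v'(ω) = (1−η)·v + η·G(ω) and u'(ω) = u + η·(v'(ω) − u). Then ∫ ‖u' − v'‖² dμ ≤ (1−η)·‖u − v‖² + 6η·‖v − ∇f(x)‖² + 6η·L²·‖x' − x‖² + η²·σ². -/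
open MeasureTheory

lemma stmt_7_aux {η A W I C S P Q σ2 : ℝ} (hη : 0 < η) (hη1 : η ≤ 1)
    (hA : 0 ≤ A) (hW : 0 ≤ W) (hP : 0 ≤ P) (hQ : 0 ≤ Q)
    (hC : C = A + 2 * η * I + η ^ 2 * W)
    (hI : 2 * I ≤ A + W)
    (hWb : W ≤ 2 * P + 2 * Q) (hS0 : 0 ≤ S) (hSσ : S ≤ σ2) :
    (1 - η) ^ 2 * (C + η ^ 2 * S) ≤ (1 - η) * A + 6 * η * P + 6 * η * Q + η ^ 2 * σ2 := by
  subst hC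
  have hη0 : (0:ℝ) ≤ 1 - η := by linarith
  have e1 : (0:ℝ) ≤ (1 - η) * (η ^ 2 * A) := by positivity
  have e2 : (0:ℝ) ≤ (1 - η) ^ 2 * (η * (A + W - 2 * I)) :=
    mul_nonneg (sq_nonneg _) (mul_nonneg hη.le (by linarith))
  have e3 : (0:ℝ) ≤ η * W * (2 - (1 + η) * (1 - η) ^ 2) := by
    have : (0:ℝ) ≤ 2 - (1 + η) * (1 - η) ^ 2 := by nlinarith [sq_nonneg (1 - η)]
    exact mul_nonneg (mul_nonneg hη.le hW) this
  have e4 : 2 * η * W ≤ 2 * η * (2 * P + 2 * Q) :=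
    mul_le_mul_of_nonneg_left hWb (by positivity)
  have e5 : (0:ℝ) ≤ η * P := by positivity
  have e6 : (0:ℝ) ≤ η * Q := by positivity
  have e7 : (0:ℝ) ≤ (1 - (1 - η) ^ 2) * (η ^ 2 * S) := by
    have : (0:ℝ) ≤ 1 - (1 - η) ^ 2 := by nlinarith
    positivity
  have e8 : η ^ 2 * S ≤ η ^ 2 * σ2 := mul_le_mul_of_nonneg_left hSσ (sq_nonneg η)
  nlinarith [e1, e2, e3, e4, e5, e6, e7, e8]

/-- One-step second-momentum deviation bound of the Byz-DM21 double-momentum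
estimator: with `v' = (1-η)•v + η•G` and `u' = u + η•(v' - u)`, the expected
squared gap between the second and first momenta contracts. -/
theorem stmt_7 {Ω : Type*} [MeasurableSpace Ω] (μ : Measure Ω)
    [IsProbabilityMeasure μ]
    {E : Type*} [NormedAddCommGroup E] [InnerProductSpace ℝ E] [CompleteSpace E]
    (f : E → ℝ) (L : ℝ) (hL : 0 ≤ L)
    (hdiff : Differentiable ℝ f)
    (hlip : ∀ x y, ‖gradient f x - gradient f y‖ ≤ L * ‖x - y‖)
    (x x' v u : E) (η σ : ℝ) (hη : 0 < η) (hη1 : η ≤ 1) (hσ : 0 ≤ σ)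
    (G : Ω → E) (hGint : Integrable G μ)
    (hGmean : ∫ ω, G ω ∂μ = gradient f x')
    (hGvar : ∫ ω, ‖G ω - gradient f x'‖ ^ 2 ∂μ ≤ σ ^ 2)
    (v' : Ω → E) (hv' : ∀ ω, v' ω = (1 - η) • v + η • G ω)
    (u' : Ω → E) (hu' : ∀ ω, u' ω = u + η • (v' ω - u)) :
    ∫ ω, ‖u' ω - v' ω‖ ^ 2 ∂μ ≤
      (1 - η) * ‖u - v‖ ^ 2 + 6 * η * ‖v - gradient f x‖ ^ 2
        + 6 * η * L ^ 2 * ‖x' - x‖ ^ 2 + η ^ 2 * σ ^ 2 := by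
  set g := gradient f x' with hg
  set a := u - v with ha
  set w := v - g with hw
  set c := a + η • w with hc
  have hξ : Integrable (fun ω => G ω - g) μ := hGint.sub (integrable_const g)
  have hmean0 : ∫ ω, (G ω - g) ∂μ = 0 := by
    rw [integral_sub hGint (integrable_const g), hGmean, integral_const]
    simp
  have hrw : ∀ ω, u' ω - v' ω = (1 - η) • (c - η • (G ω - g)) := by
    intro ω
    simp only [hu' ω, hv' ω, hc, ha, hw]
    module
  have hLHS : (fun ω => ‖u' ω - v' ω‖ ^ 2)
      = fun ω => (1 - η) ^ 2 * ‖c - η • (G ω - g)‖ ^ 2 := by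
    funext ω
    rw [hrw ω, norm_smul, mul_pow, Real.norm_eq_abs, sq_abs]
  have hwbound : ‖w‖ ^ 2 ≤ 2 * ‖v - gradient f x‖ ^ 2 + 2 * (L ^ 2 * ‖x' - x‖ ^ 2) := by
    have htri : ‖w‖ ≤ ‖v - gradient f x‖ + ‖gradient f x - g‖ := by
      have hwe : w = (v - gradient f x) + (gradient f x - g) := by rw [hw]; abel
      rw [hwe]; exact norm_add_le _ _
    have hl : ‖gradient f x - g‖ ≤ L * ‖x' - x‖ := by
      rw [hg]
      calc ‖gradient f x - gradient f x'‖ ≤ L * ‖x - x'‖ := hlip x x'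
        _ = L * ‖x' - x‖ := by rw [norm_sub_rev]
    have h2 : (0:ℝ) ≤ ‖x' - x‖ := norm_nonneg _
    have htri2 : ‖w‖ ≤ ‖v - gradient f x‖ + L * ‖x' - x‖ := htri.trans (by linarith)
    have h4 : ‖w‖ ^ 2 ≤ (‖v - gradient f x‖ + L * ‖x' - x‖) ^ 2 :=
      pow_le_pow_left₀ (norm_nonneg w) htri2 2
    nlinarith [sq_nonneg (‖v - gradient f x‖ - L * ‖x' - x‖)]
  have hRHSpos : (0:ℝ) ≤ (1 - η) * ‖u - v‖ ^ 2 + 6 * η * ‖v - gradient f x‖ ^ 2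
        + 6 * η * L ^ 2 * ‖x' - x‖ ^ 2 + η ^ 2 * σ ^ 2 := by
    have h1 : (0:ℝ) ≤ 1 - η := by linarith
    positivity
  by_cases hint : Integrable (fun ω => ‖G ω - g‖ ^ 2) μ
  · -- main case
    have hsm : Integrable (fun ω => η • (G ω - g)) μ := hξ.smul η
    have hexpand : ∀ ω, ‖c - η • (G ω - g)‖ ^ 2
        = ‖c‖ ^ 2 - 2 * (inner ℝ c (η • (G ω - g)) : ℝ) + η ^ 2 * ‖G ω - g‖ ^ 2 := by
      intro ω
      rw [@norm_sub_sq_real, norm_smul, Real.norm_eq_abs, abs_of_pos hη]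
      ring
    have hinnerInt : Integrable (fun ω => (inner ℝ c (η • (G ω - g)) : ℝ)) μ :=
      hsm.const_inner c
    have hzero : ∫ ω, (inner ℝ c (η • (G ω - g)) : ℝ) ∂μ = 0 := by
      rw [integral_inner hsm, integral_smul, hmean0, smul_zero, inner_zero_right]
    have hI1 : Integrable (fun ω => ‖c‖ ^ 2 - 2 * (inner ℝ c (η • (G ω - g)) : ℝ)) μ :=
      (integrable_const _).sub (hinnerInt.const_mul 2)
    have hI2 : Integrable (fun ω => η ^ 2 * ‖G ω - g‖ ^ 2) μ := hint.const_mul _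
    have hintegral : ∫ ω, ‖c - η • (G ω - g)‖ ^ 2 ∂μ
        = ‖c‖ ^ 2 + η ^ 2 * ∫ ω, ‖G ω - g‖ ^ 2 ∂μ := by
      simp_rw [hexpand]
      rw [integral_add hI1 hI2, integral_sub (integrable_const _) (hinnerInt.const_mul 2),
        integral_const, integral_const_mul, integral_const_mul, hzero]
      simp
    have hcs : ‖c‖ ^ 2 = ‖a‖ ^ 2 + 2 * η * (inner ℝ a w : ℝ) + η ^ 2 * ‖w‖ ^ 2 := by
      rw [hc, @norm_add_sq_real, real_inner_smul_right, norm_smul, Real.norm_eq_abs,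
        abs_of_pos hη]
      ring
    have hS0 : 0 ≤ ∫ ω, ‖G ω - g‖ ^ 2 ∂μ :=
      integral_nonneg fun ω => by positivity
    have hiaw : 2 * (inner ℝ a w : ℝ) ≤ ‖a‖ ^ 2 + ‖w‖ ^ 2 := by
      nlinarith [real_inner_le_norm a w, sq_nonneg (‖a‖ - ‖w‖)]
    rw [hLHS, integral_const_mul, hintegral]
    have hav : ‖a‖ = ‖u - v‖ := by rw [ha]
    rw [← hav]
    have key := stmt_7_aux (A := ‖a‖ ^ 2) (W := ‖w‖ ^ 2) (I := (inner ℝ a w : ℝ))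
      (C := ‖c‖ ^ 2) (S := ∫ ω, ‖G ω - g‖ ^ 2 ∂μ) (P := ‖v - gradient f x‖ ^ 2)
      (Q := L ^ 2 * ‖x' - x‖ ^ 2) (σ2 := σ ^ 2) hη hη1 (sq_nonneg _) (sq_nonneg _)
      (sq_nonneg _) (by positivity) hcs hiaw hwbound hS0 hGvar
    linarith [key]
  · -- non-integrable case: LHS integral is 0
    rcases eq_or_lt_of_le hη1 with hη1' | hη1'
    · have hz : ∀ ω, ‖u' ω - v' ω‖ ^ 2 = 0 := by
        intro ω
        rw [hrw ω, ← hη1']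
        simp
      simp_rw [hz]
      simpa using hRHSpos
    · have hne : ((1:ℝ) - η) ^ 2 ≠ 0 := pow_ne_zero _ (ne_of_gt (by linarith))
      have hnint : ¬ Integrable (fun ω => ‖u' ω - v' ω‖ ^ 2) μ := by
        intro hI
        rw [hLHS] at hI
        have h2 : Integrable (fun ω => ‖c - η • (G ω - g)‖ ^ 2) μ := by
          have h3 := hI.const_mul (((1 - η) ^ 2)⁻¹)
          have he : (fun ω => ‖c - η • (G ω - g)‖ ^ 2)
              = fun ω => ((1 - η) ^ 2)⁻¹ * ((1 - η) ^ 2 * ‖c - η • (G ω - g)‖ ^ 2) := by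
            funext ω
            rw [← mul_assoc, inv_mul_cancel₀ hne, one_mul]
          rw [he]
          exact h3
        apply hint
        have hξm : AEStronglyMeasurable (fun ω => ‖G ω - g‖ ^ 2) μ := by
          have h := hξ.aestronglyMeasurable.norm
          simpa [pow_two, Pi.mul_def] using h.mul h
        have hbound : ∀ ω, ‖‖G ω - g‖ ^ 2‖
            ≤ (2 / η ^ 2) * ‖c - η • (G ω - g)‖ ^ 2 + (2 / η ^ 2) * ‖c‖ ^ 2 := by
          intro ω
          have h1 : ‖η • (G ω - g)‖ ≤ ‖c‖ + ‖c - η • (G ω - g)‖ := by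
            calc ‖η • (G ω - g)‖ = ‖c - (c - η • (G ω - g))‖ := by rw [sub_sub_cancel]
              _ ≤ ‖c‖ + ‖c - η • (G ω - g)‖ := norm_sub_le _ _
          have h2' : ‖η • (G ω - g)‖ = η * ‖G ω - g‖ := by
            rw [norm_smul, Real.norm_eq_abs, abs_of_pos hη]
          rw [Real.norm_of_nonneg (by positivity)]
          have h1' : η * ‖G ω - g‖ ≤ ‖c‖ + ‖c - η • (G ω - g)‖ := h2' ▸ h1
          have h3 : η ^ 2 * ‖G ω - g‖ ^ 2
              ≤ 2 * ‖c - η • (G ω - g)‖ ^ 2 + 2 * ‖c‖ ^ 2 := by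
            nlinarith [mul_self_le_mul_self (by positivity : (0:ℝ) ≤ η * ‖G ω - g‖) h1',
              sq_nonneg (‖c - η • (G ω - g)‖ - ‖c‖)]
          have hη2 : (0:ℝ) < η ^ 2 := by positivity
          calc ‖G ω - g‖ ^ 2 = (η ^ 2 * ‖G ω - g‖ ^ 2) / η ^ 2 := by
                field_simp
            _ ≤ (2 * ‖c - η • (G ω - g)‖ ^ 2 + 2 * ‖c‖ ^ 2) / η ^ 2 := by gcongr
            _ = (2 / η ^ 2) * ‖c - η • (G ω - g)‖ ^ 2 + (2 / η ^ 2) * ‖c‖ ^ 2 := by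
                ring
        exact ((h2.const_mul _).add (integrable_const _)).mono' hξm
          (Filter.Eventually.of_forall hbound)
      rw [integral_undef hnint]
      exact hRHSpos
end

section
/- Let (Ω, μ) be a probability space and E a real inner product space. Let f : E → ℝ be differentiable, x, x', v ∈ E, η ∈ (0,1], σ ≥ 0, ℓ ≥ 0. Let G, G' : Ω → E be Bochner integrable with ∫ G dμ = ∇f(x), ∫ G' dμ = ∇f(x'), ∫ ‖G' − ∇f(x')‖² dμ ≤ σ², and ‖G'(ω) − G(ω)‖ ≤ ℓ·‖x' − x‖ for μ-almost every ω. Define the variance-reduced estimator v'(ω) = (1−η)·v + η·G'(ω) + (1−η)·(G'(ω) − G(ω)). Then ∫ ‖v' − ∇f(x')‖² dμ ≤ (1−η)·‖v − ∇f(x)‖² + 2η²·σ² + 2ℓ²·‖x' − x‖². -/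
open MeasureTheory

set_option maxHeartbeats 1000000

/-- One-step deviation bound of the STORM-type variance-reduced momentum
estimator `v' = (1-η)•v + η•G' + (1-η)•(G' - G)` used in Byz-VR-DM21. -/
theorem stmt_9 {Ω : Type*} [MeasurableSpace Ω] (μ : Measure Ω)
    [IsProbabilityMeasure μ]
    {E : Type*} [NormedAddCommGroup E] [InnerProductSpace ℝ E] [CompleteSpace E]
    (f : E → ℝ) (hdiff : Differentiable ℝ f)
    (x x' v : E) (η σ ℓ : ℝ)
    (hη : 0 < η) (hη1 : η ≤ 1) (hσ : 0 ≤ σ) (hℓ : 0 ≤ ℓ)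
    (G G' : Ω → E) (hGint : Integrable G μ) (hG'int : Integrable G' μ)
    (hGmean : ∫ ω, G ω ∂μ = gradient f x)
    (hG'mean : ∫ ω, G' ω ∂μ = gradient f x')
    (hG'var : ∫ ω, ‖G' ω - gradient f x'‖ ^ 2 ∂μ ≤ σ ^ 2)
    (hlipae : ∀ᵐ ω ∂μ, ‖G' ω - G ω‖ ≤ ℓ * ‖x' - x‖)
    (v' : Ω → E)
    (hv' : ∀ ω, v' ω = (1 - η) • v + η • G' ω + (1 - η) • (G' ω - G ω)) :
    ∫ ω, ‖v' ω - gradient f x'‖ ^ 2 ∂μ ≤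
      (1 - η) * ‖v - gradient f x‖ ^ 2 + 2 * η ^ 2 * σ ^ 2
        + 2 * ℓ ^ 2 * ‖x' - x‖ ^ 2 := by
  have hη0' : (0:ℝ) ≤ 1 - η := by linarith
  set g : E := gradient f x with hgdef
  set g' : E := gradient f x' with hg'def
  set L : ℝ := ℓ * ‖x' - x‖ with hLdef
  have hL0 : 0 ≤ L := mul_nonneg hℓ (norm_nonneg _)
  have hL2 : L ^ 2 = ℓ ^ 2 * ‖x' - x‖ ^ 2 := by rw [hLdef]; ring
  by_cases hint : Integrable (fun ω => ‖v' ω - g'‖ ^ 2) μ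
  · -- main case
    set c : E := g' - g with hcdef
    set Y : Ω → E := fun ω => G' ω - G ω with hYdef
    have hYint : Integrable Y μ := hG'int.sub hGint
    have hYmean : ∫ ω, Y ω ∂μ = c := by
      rw [hYdef]
      rw [integral_sub hG'int hGint, hGmean, hG'mean]
    set W : Ω → E := fun ω => Y ω - c with hWdef
    have hWint : Integrable W μ := hYint.sub (integrable_const c)
    have hWmean : ∫ ω, W ω ∂μ = 0 := by
      rw [hWdef, integral_sub hYint (integrable_const c), hYmean]
      simp
    have hG'sub : Integrable (fun ω => G' ω - g') μ := hG'int.sub (integrable_const g')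
    set Z : Ω → E := fun ω => η • (G' ω - g') + (1 - η) • W ω with hZdef
    have hA : Integrable (fun ω => η • (G' ω - g')) μ := by exact hG'sub.smul η
    have hB : Integrable (fun ω => (1 - η) • W ω) μ := by exact hWint.smul (1 - η)
    have hZint : Integrable Z μ := by exact hA.add hB
    have h1 : ∫ ω, (G' ω - g') ∂μ = 0 := by
      rw [integral_sub hG'int (integrable_const _), hG'mean, integral_const]
      simp
    have hZmean : ∫ ω, Z ω ∂μ = 0 := by
      simp only [hZdef]
      rw [integral_add hA hB, integral_smul, integral_smul, h1, hWmean]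
      simp
    set a : E := (1 - η) • (v - g) with hadef
    have hdec : ∀ ω, v' ω - g' = a + Z ω := by
      intro ω
      rw [hv' ω, hadef, hZdef, hWdef, hYdef, hcdef]
      module
    have hmeas_sq : ∀ {h : Ω → E}, AEStronglyMeasurable h μ →
        AEStronglyMeasurable (fun ω => ‖h ω‖ ^ 2) μ := by
      intro h hm
      exact hm.norm.pow 2
    have hZsq : Integrable (fun ω => ‖Z ω‖ ^ 2) μ := by
      have hbd : Integrable (fun ω => 2 * ‖v' ω - g'‖ ^ 2 + 2 * ‖a‖ ^ 2) μ := by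
        exact (hint.const_mul 2).add (integrable_const (2 * ‖a‖ ^ 2))
      refine hbd.mono' (hmeas_sq hZint.aestronglyMeasurable) ?_
      filter_upwards with ω
      have hz : Z ω = (v' ω - g') - a := by rw [hdec ω]; abel
      rw [Real.norm_of_nonneg (by positivity)]
      have h2 : ‖Z ω‖ ≤ ‖v' ω - g'‖ + ‖a‖ := by
        rw [hz]; exact norm_sub_le _ _
      nlinarith [norm_nonneg (Z ω), norm_nonneg (v' ω - g'), norm_nonneg a,
        sq_nonneg (‖v' ω - g'‖ - ‖a‖), h2]
    have hWsq : Integrable (fun ω => ‖W ω‖ ^ 2) μ := by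
      refine (integrable_const ((L + ‖c‖) ^ 2)).mono'
        (hmeas_sq hWint.aestronglyMeasurable) ?_
      filter_upwards [hlipae] with ω hω
      rw [Real.norm_of_nonneg (by positivity)]
      have h2 : ‖W ω‖ ≤ L + ‖c‖ := by
        calc ‖W ω‖ ≤ ‖Y ω‖ + ‖c‖ := norm_sub_le _ _
          _ ≤ L + ‖c‖ := by
            have : ‖Y ω‖ ≤ L := hω
            linarith
      nlinarith [norm_nonneg (W ω), add_nonneg hL0 (norm_nonneg c)]
    have hYsq : Integrable (fun ω => ‖Y ω‖ ^ 2) μ := by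
      refine (integrable_const (L ^ 2)).mono'
        (hmeas_sq hYint.aestronglyMeasurable) ?_
      filter_upwards [hlipae] with ω hω
      rw [Real.norm_of_nonneg (by positivity)]
      have : ‖Y ω‖ ≤ L := hω
      nlinarith [norm_nonneg (Y ω)]
    have hYsqle : ∫ ω, ‖Y ω‖ ^ 2 ∂μ ≤ L ^ 2 := by
      have h2 : ∫ ω, ‖Y ω‖ ^ 2 ∂μ ≤ ∫ _ω, L ^ 2 ∂μ := by
        refine integral_mono_ae hYsq (integrable_const _) ?_
        filter_upwards [hlipae] with ω hω
        have : ‖Y ω‖ ≤ L := hω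
        nlinarith [norm_nonneg (Y ω)]
      simpa using h2
    have hWvar : ∫ ω, ‖W ω‖ ^ 2 ∂μ ≤ L ^ 2 := by
      have hid : (fun ω => ‖W ω‖ ^ 2)
          = fun ω => ‖Y ω‖ ^ 2 - 2 * (inner ℝ c (Y ω) : ℝ) + ‖c‖ ^ 2 := by
        funext ω
        rw [hWdef]
        rw [norm_sub_sq_real, real_inner_comm]
      have hinner : Integrable (fun ω => (inner ℝ c (Y ω) : ℝ)) μ := hYint.const_inner c
      have hinner2 : Integrable (fun ω => 2 * (inner ℝ c (Y ω) : ℝ)) μ := hinner.const_mul 2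
      have hsub : Integrable (fun ω => ‖Y ω‖ ^ 2 - 2 * (inner ℝ c (Y ω) : ℝ)) μ := by
        exact hYsq.sub hinner2
      have hcalc : ∫ ω, ‖W ω‖ ^ 2 ∂μ
          = (∫ ω, ‖Y ω‖ ^ 2 ∂μ) - ‖c‖ ^ 2 := by
        rw [hid, integral_add hsub (integrable_const _),
          integral_sub hYsq hinner2, integral_const_mul _ _,
          integral_inner hYint, hYmean, integral_const, real_inner_self_eq_norm_sq]
        simp
        ring
      rw [hcalc]
      nlinarith [sq_nonneg ‖c‖]
    have hG'sq : Integrable (fun ω => ‖G' ω - g'‖ ^ 2) μ := by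
      have hbd : Integrable
          (fun ω => (2 * ‖Z ω‖ ^ 2 + 2 * (1 - η) ^ 2 * ‖W ω‖ ^ 2) / η ^ 2) μ := by
        exact ((hZsq.const_mul 2).add (hWsq.const_mul (2 * (1 - η) ^ 2))).div_const (η ^ 2)
      refine hbd.mono' (hmeas_sq hG'sub.aestronglyMeasurable) ?_
      filter_upwards with ω
      rw [Real.norm_of_nonneg (by positivity)]
      have hzw : η • (G' ω - g') = Z ω - (1 - η) • W ω := by
        simp only [hZdef]; abel
      have h2 : η * ‖G' ω - g'‖ ≤ ‖Z ω‖ + (1 - η) * ‖W ω‖ := by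
        have := norm_sub_le (Z ω) ((1 - η) • W ω)
        rw [← hzw, norm_smul, Real.norm_of_nonneg hη.le] at this
        rw [norm_smul, Real.norm_of_nonneg hη0'] at this
        linarith
      rw [le_div_iff₀ (by positivity : (0:ℝ) < η ^ 2)]
      nlinarith [norm_nonneg (G' ω - g'), norm_nonneg (Z ω), norm_nonneg (W ω),
        sq_nonneg (‖Z ω‖ - (1 - η) * ‖W ω‖), h2,
        mul_nonneg hη0' (norm_nonneg (W ω)),
        mul_le_mul h2 h2 (by positivity) (by positivity)]
    have hZsqle : ∫ ω, ‖Z ω‖ ^ 2 ∂μ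
        ≤ 2 * η ^ 2 * (∫ ω, ‖G' ω - g'‖ ^ 2 ∂μ)
          + 2 * (1 - η) ^ 2 * (∫ ω, ‖W ω‖ ^ 2 ∂μ) := by
      have hmono : ∫ ω, ‖Z ω‖ ^ 2 ∂μ
          ≤ ∫ ω, (2 * η ^ 2 * ‖G' ω - g'‖ ^ 2 + 2 * (1 - η) ^ 2 * ‖W ω‖ ^ 2) ∂μ := by
        have hbd : Integrable
            (fun ω => 2 * η ^ 2 * ‖G' ω - g'‖ ^ 2 + 2 * (1 - η) ^ 2 * ‖W ω‖ ^ 2) μ := by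
          exact (hG'sq.const_mul (2 * η ^ 2)).add (hWsq.const_mul (2 * (1 - η) ^ 2))
        refine integral_mono hZsq hbd ?_
        intro ω
        dsimp only
        have h2 : ‖Z ω‖ ≤ η * ‖G' ω - g'‖ + (1 - η) * ‖W ω‖ := by
          calc ‖Z ω‖ ≤ ‖η • (G' ω - g')‖ + ‖(1 - η) • W ω‖ := norm_add_le _ _
            _ = η * ‖G' ω - g'‖ + (1 - η) * ‖W ω‖ := by
              rw [norm_smul, norm_smul, Real.norm_of_nonneg hη.le,
                Real.norm_of_nonneg hη0']
        have h3 : 0 ≤ η * ‖G' ω - g'‖ + (1 - η) * ‖W ω‖ := by positivity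
        nlinarith [norm_nonneg (Z ω),
          sq_nonneg (η * ‖G' ω - g'‖ - (1 - η) * ‖W ω‖)]
      rw [integral_add (hG'sq.const_mul (2 * η ^ 2)) (hWsq.const_mul (2 * (1 - η) ^ 2)),
        integral_const_mul _ _, integral_const_mul _ _] at hmono
      exact hmono
    have key : ∫ ω, ‖v' ω - g'‖ ^ 2 ∂μ = ‖a‖ ^ 2 + ∫ ω, ‖Z ω‖ ^ 2 ∂μ := by
      have hpt : (fun ω => ‖v' ω - g'‖ ^ 2)
          = fun ω => ‖a‖ ^ 2 + 2 * (inner ℝ a (Z ω) : ℝ) + ‖Z ω‖ ^ 2 := by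
        funext ω
        rw [hdec ω, norm_add_sq_real]
      have hinnZ : Integrable (fun ω => (inner ℝ a (Z ω) : ℝ)) μ := hZint.const_inner a
      have hinnZ2 : Integrable (fun ω => 2 * (inner ℝ a (Z ω) : ℝ)) μ := hinnZ.const_mul 2
      have hI1 : Integrable (fun ω => ‖a‖ ^ 2 + 2 * (inner ℝ a (Z ω) : ℝ)) μ := by
        exact (integrable_const _).add hinnZ2
      rw [hpt, integral_add hI1 hZsq,
        integral_add (integrable_const _) hinnZ2,
        integral_const_mul _ _, integral_inner hZint, hZmean, integral_const]
      simp
    have hasq : ‖a‖ ^ 2 = (1 - η) ^ 2 * ‖v - g‖ ^ 2 := by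
      rw [hadef, norm_smul, Real.norm_of_nonneg hη0']
      ring
    have hWnn : 0 ≤ ∫ ω, ‖W ω‖ ^ 2 ∂μ := by positivity
    have hG'nn : 0 ≤ ∫ ω, ‖G' ω - g'‖ ^ 2 ∂μ := by positivity
    rw [key, hasq]
    nlinarith [hZsqle, hWvar, hG'var, hL2, sq_nonneg ‖v - g‖, sq_nonneg (1 - η),
      sq_nonneg η, sq_nonneg L,
      mul_nonneg (mul_nonneg hη0' hη.le) (sq_nonneg ‖v - g‖),
      mul_nonneg (sq_nonneg η) (sub_nonneg.mpr hG'var),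
      mul_nonneg (sq_nonneg (1 - η)) (sub_nonneg.mpr hWvar),
      mul_nonneg (mul_nonneg hη.le (by linarith : (0:ℝ) ≤ 2 - η)) (sq_nonneg L)]
  · rw [integral_undef hint]
    have h1 : 0 ≤ (1 - η) * ‖v - g‖ ^ 2 := mul_nonneg hη0' (sq_nonneg _)
    nlinarith [sq_nonneg η, sq_nonneg σ, sq_nonneg ℓ, sq_nonneg ‖x' - x‖,
      mul_nonneg (sq_nonneg η) (sq_nonneg σ), mul_nonneg (sq_nonneg ℓ) (sq_nonneg ‖x' - x‖)]
end

section
/- Let (Ω, μ) be a probability space and E a real inner product space. Let f : E → ℝ be differentiable with L-Lipschitz gradient. Let x, x', v, u ∈ E, η ∈ (0,1], σ ≥ 0, ℓ ≥ 0. Let G, G' : Ω → E be Bochner integrable with ∫ G dμ = ∇f(x), ∫ G' dμ = ∇f(x'), ∫ ‖G' − ∇f(x')‖² dμ ≤ σ², and ‖G'(ω) − G(ω)‖ ≤ ℓ·‖x' − x‖ for μ-almost every ω. Define v'(ω) = (1−η)·v + η·G'(ω) + (1−η)·(G'(ω) − G(ω)) and u'(ω) = u + η·(v'(ω) − u). Then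 ∫ ‖u' − v'‖² dμ ≤ (1−η)·‖u − v‖² + 6η·‖v − ∇f(x)‖² + 2·(ℓ² + (2/η)·L²)·‖x' − x‖² + 2η²·σ². -/
open MeasureTheory

set_option maxHeartbeats 2000000 in
/-- One-step second-momentum deviation bound of the Byz-VR-DM21 estimator:
with the STORM-type update `v' = (1-η)•v + η•G' + (1-η)•(G' - G)` and the
second momentum `u' = u + η•(v' - u)`. -/
theorem stmt_11 {Ω : Type*} [MeasurableSpace Ω] (μ : Measure Ω)
    [IsProbabilityMeasure μ]
    {E : Type*} [NormedAddCommGroup E] [InnerProductSpace ℝ E] [CompleteSpace E]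
    (f : E → ℝ) (L : ℝ) (hL : 0 ≤ L)
    (hdiff : Differentiable ℝ f)
    (hlip : ∀ x y, ‖gradient f x - gradient f y‖ ≤ L * ‖x - y‖)
    (x x' v u : E) (η σ ℓ : ℝ)
    (hη : 0 < η) (hη1 : η ≤ 1) (hσ : 0 ≤ σ) (hℓ : 0 ≤ ℓ)
    (G G' : Ω → E) (hGint : Integrable G μ) (hG'int : Integrable G' μ)
    (hGmean : ∫ ω, G ω ∂μ = gradient f x)
    (hG'mean : ∫ ω, G' ω ∂μ = gradient f x')
    (hG'var : ∫ ω, ‖G' ω - gradient f x'‖ ^ 2 ∂μ ≤ σ ^ 2)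
    (hlipae : ∀ᵐ ω ∂μ, ‖G' ω - G ω‖ ≤ ℓ * ‖x' - x‖)
    (v' : Ω → E)
    (hv' : ∀ ω, v' ω = (1 - η) • v + η • G' ω + (1 - η) • (G' ω - G ω))
    (u' : Ω → E) (hu' : ∀ ω, u' ω = u + η • (v' ω - u)) :
    ∫ ω, ‖u' ω - v' ω‖ ^ 2 ∂μ ≤
      (1 - η) * ‖u - v‖ ^ 2 + 6 * η * ‖v - gradient f x‖ ^ 2
        + 2 * (ℓ ^ 2 + (2 / η) * L ^ 2) * ‖x' - x‖ ^ 2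
        + 2 * η ^ 2 * σ ^ 2 := by
  classical
  set g : E := gradient f x with hg
  set g' : E := gradient f x' with hg'
  set D : ℝ := ‖x' - x‖ with hD
  have hDnn : 0 ≤ D := norm_nonneg _
  set c : E := (u - v) + (η • (v - g') + (1 - η) • (g - g')) with hc
  set w : Ω → E := fun ω => η • (g' - G' ω) + (1 - η) • ((G ω - G' ω) - (g - g')) with hw
  have h1mη : 0 ≤ 1 - η := by linarith
  have hpt : ∀ ω, u' ω - v' ω = (1 - η) • (c + w ω) := by
    intro ω
    rw [hu' ω, hv' ω]
    simp only [hc, hw]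
    module
  have hRHSnn : 0 ≤ (1 - η) * ‖u - v‖ ^ 2 + 6 * η * ‖v - g‖ ^ 2
      + 2 * (ℓ ^ 2 + (2 / η) * L ^ 2) * D ^ 2 + 2 * η ^ 2 * σ ^ 2 := by
    have t1 : 0 ≤ (1 - η) * ‖u - v‖ ^ 2 := mul_nonneg h1mη (sq_nonneg _)
    have t2 : 0 ≤ 6 * η * ‖v - g‖ ^ 2 := by positivity
    have t3 : 0 ≤ 2 * (ℓ ^ 2 + (2 / η) * L ^ 2) * D ^ 2 := by positivity
    have t4 : 0 ≤ 2 * η ^ 2 * σ ^ 2 := by positivity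
    linarith
  by_cases hint : Integrable (fun ω => ‖u' ω - v' ω‖ ^ 2) μ
  swap
  · rw [integral_undef hint]
    exact hRHSnn
  rcases eq_or_lt_of_le hη1 with hη1' | hη1'
  · -- η = 1 case: u' - v' = 0
    have hz : ∀ ω, u' ω - v' ω = 0 := by
      intro ω
      rw [hpt ω, ← hη1']
      simp
    calc ∫ ω, ‖u' ω - v' ω‖ ^ 2 ∂μ = ∫ _, (0:ℝ) ∂μ := by
          refine integral_congr_ae (Filter.Eventually.of_forall fun ω => ?_)
          simp [hz ω]
      _ = 0 := integral_zero _ _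
      _ ≤ _ := hRHSnn
  -- main case η < 1
  have he : 0 < 1 - η := by linarith
  set p : Ω → E := fun ω => G' ω - g' with hp
  set q : Ω → E := fun ω => (G ω - G' ω) - (g - g') with hq
  have hGG'int : Integrable (fun ω => G ω - G' ω) μ := hGint.sub hG'int
  have hpint : Integrable p μ := hG'int.sub (integrable_const _)
  have hqint : Integrable q μ := hGG'int.sub (integrable_const _)
  have hw1int : Integrable (fun ω => η • (g' - G' ω)) μ :=
    Integrable.smul η ((integrable_const g').sub hG'int)
  have hw2int : Integrable (fun ω => (1 - η) • ((G ω - G' ω) - (g - g'))) μ :=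
    Integrable.smul (1 - η) hqint
  have hwint : Integrable w μ := hw1int.add hw2int
  have hwmean : ∫ ω, w ω ∂μ = 0 := by
    simp only [hw]
    rw [integral_add hw1int hw2int, integral_smul, integral_smul,
      integral_sub (integrable_const _) hG'int,
      integral_sub hGG'int (integrable_const _),
      integral_sub hGint hG'int, integral_const]
    simp [hGmean, hG'mean]
  -- Integrability facts
  have hcw2 : Integrable (fun ω => ‖c + w ω‖ ^ 2) μ := by
    have h := hint.const_mul (((1 - η) ^ 2)⁻¹)
    refine h.congr (Filter.Eventually.of_forall fun ω => ?_)
    show ((1 - η) ^ 2)⁻¹ * ‖u' ω - v' ω‖ ^ 2 = ‖c + w ω‖ ^ 2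
    rw [hpt ω, norm_smul, Real.norm_eq_abs, abs_of_nonneg h1mη, mul_pow,
      inv_mul_cancel_left₀ (pow_pos he 2).ne']
  have hwmeas : AEStronglyMeasurable w μ := hwint.aestronglyMeasurable
  have hw2 : Integrable (fun ω => ‖w ω‖ ^ 2) μ := by
    have hbnd : Integrable (fun ω => 2 * ‖c + w ω‖ ^ 2 + 2 * ‖c‖ ^ 2) μ :=
      (hcw2.const_mul 2).add (integrable_const _)
    refine hbnd.mono' (hwmeas.norm.pow 2) (Filter.Eventually.of_forall fun ω => ?_)
    show ‖‖w ω‖ ^ 2‖ ≤ 2 * ‖c + w ω‖ ^ 2 + 2 * ‖c‖ ^ 2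
    rw [Real.norm_eq_abs, abs_of_nonneg (by positivity)]
    have h1 : ‖w ω‖ ≤ ‖c + w ω‖ + ‖c‖ := by
      have := norm_sub_le (c + w ω) c
      simpa using this
    nlinarith [norm_nonneg (w ω), norm_nonneg (c + w ω), norm_nonneg c,
      mul_self_le_mul_self (norm_nonneg (w ω)) h1,
      sq_nonneg (‖c + w ω‖ - ‖c‖)]
  have hqbd : ∀ᵐ ω ∂μ, ‖q ω‖ ≤ (ℓ + L) * D := by
    filter_upwards [hlipae] with ω hω
    have h1 : ‖G ω - G' ω‖ ≤ ℓ * D := by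
      rw [norm_sub_rev]; exact hω
    have h2 : ‖g - g'‖ ≤ L * D := by
      rw [norm_sub_rev, hg, hg']
      exact hlip x' x
    calc ‖q ω‖ ≤ ‖G ω - G' ω‖ + ‖g - g'‖ := norm_sub_le _ _
      _ ≤ ℓ * D + L * D := add_le_add h1 h2
      _ = (ℓ + L) * D := by ring
  have hq2 : Integrable (fun ω => ‖q ω‖ ^ 2) μ := by
    refine (integrable_const (((ℓ + L) * D) ^ 2)).mono'
      (hqint.aestronglyMeasurable.norm.pow 2) ?_
    filter_upwards [hqbd] with ω hω
    show ‖‖q ω‖ ^ 2‖ ≤ ((ℓ + L) * D) ^ 2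
    rw [Real.norm_eq_abs, abs_of_nonneg (by positivity)]
    exact pow_le_pow_left₀ (norm_nonneg _) hω 2
  have hp2 : Integrable (fun ω => ‖p ω‖ ^ 2) μ := by
    have hbnd : Integrable (fun ω => 2 / η ^ 2 * ‖w ω‖ ^ 2 + 2 / η ^ 2 * ‖q ω‖ ^ 2) μ :=
      (hw2.const_mul _).add (hq2.const_mul _)
    refine hbnd.mono' (hpint.aestronglyMeasurable.norm.pow 2)
      (Filter.Eventually.of_forall fun ω => ?_)
    show ‖‖p ω‖ ^ 2‖ ≤ 2 / η ^ 2 * ‖w ω‖ ^ 2 + 2 / η ^ 2 * ‖q ω‖ ^ 2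
    rw [Real.norm_eq_abs, abs_of_nonneg (by positivity)]
    have hsm : η • p ω = (1 - η) • q ω - w ω := by
      simp only [hw, hp, hq]; module
    have h1 : η * ‖p ω‖ ≤ (1 - η) * ‖q ω‖ + ‖w ω‖ := by
      have h2 := norm_sub_le ((1 - η) • q ω) (w ω)
      rw [← hsm, norm_smul, norm_smul, Real.norm_eq_abs, Real.norm_eq_abs,
        abs_of_pos hη, abs_of_nonneg h1mη] at h2
      exact h2
    have h3 : η * ‖p ω‖ ≤ ‖q ω‖ + ‖w ω‖ := by
      have : (1 - η) * ‖q ω‖ ≤ 1 * ‖q ω‖ :=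
        mul_le_mul_of_nonneg_right (by linarith) (norm_nonneg _)
      linarith
    rw [div_mul_eq_mul_div, div_mul_eq_mul_div, ← add_div,
      le_div_iff₀ (by positivity : (0:ℝ) < η ^ 2)]
    nlinarith [norm_nonneg (p ω), norm_nonneg (q ω), norm_nonneg (w ω),
      sq_nonneg (‖q ω‖ - ‖w ω‖),
      mul_self_le_mul_self (mul_nonneg hη.le (norm_nonneg (p ω))) h3]
  -- key identity: ∫‖c+w‖² = ‖c‖² + ∫‖w‖²
  have hinner_int : Integrable (fun ω => 2 * (inner ℝ c (w ω) : ℝ)) μ :=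
    (hwint.const_inner c).const_mul 2
  have hi1 : Integrable (fun ω => ‖c‖ ^ 2 + 2 * (inner ℝ c (w ω) : ℝ)) μ :=
    (integrable_const _).add hinner_int
  have hkey : ∫ ω, ‖c + w ω‖ ^ 2 ∂μ = ‖c‖ ^ 2 + ∫ ω, ‖w ω‖ ^ 2 ∂μ := by
    have hptc : ∀ ω, ‖c + w ω‖ ^ 2
        = ‖c‖ ^ 2 + 2 * (inner ℝ c (w ω) : ℝ) + ‖w ω‖ ^ 2 :=
      fun ω => norm_add_sq_real c (w ω)
    calc ∫ ω, ‖c + w ω‖ ^ 2 ∂μ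
        = ∫ ω, (‖c‖ ^ 2 + 2 * (inner ℝ c (w ω) : ℝ) + ‖w ω‖ ^ 2) ∂μ :=
          integral_congr_ae (Filter.Eventually.of_forall hptc)
      _ = (∫ _, ‖c‖ ^ 2 ∂μ) + (∫ ω, 2 * (inner ℝ c (w ω) : ℝ) ∂μ)
            + ∫ ω, ‖w ω‖ ^ 2 ∂μ := by
          rw [integral_add hi1 hw2, integral_add (integrable_const _) hinner_int]
      _ = ‖c‖ ^ 2 + ∫ ω, ‖w ω‖ ^ 2 ∂μ := by
          rw [integral_const_mul, integral_inner hwint, hwmean, inner_zero_right,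
            integral_const]
          simp
  -- LHS rewrite
  have hLHS : ∫ ω, ‖u' ω - v' ω‖ ^ 2 ∂μ
      = (1 - η) ^ 2 * (‖c‖ ^ 2 + ∫ ω, ‖w ω‖ ^ 2 ∂μ) := by
    rw [← hkey, ← integral_const_mul]
    refine integral_congr_ae (Filter.Eventually.of_forall fun ω => ?_)
    show ‖u' ω - v' ω‖ ^ 2 = (1 - η) ^ 2 * ‖c + w ω‖ ^ 2
    rw [hpt ω, norm_smul, Real.norm_eq_abs, abs_of_nonneg h1mη, mul_pow]
  -- variance bound for q
  set Y : Ω → E := fun ω => G ω - G' ω with hY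
  have hYint : Integrable Y μ := hGG'int
  have hYmean : ∫ ω, Y ω ∂μ = g - g' := by
    simp only [hY]
    rw [integral_sub hGint hG'int, hGmean, hG'mean]
  have hYbd : ∀ᵐ ω ∂μ, ‖Y ω‖ ≤ ℓ * D := by
    filter_upwards [hlipae] with ω hω
    show ‖G ω - G' ω‖ ≤ ℓ * D
    rw [norm_sub_rev]; exact hω
  have hY2 : Integrable (fun ω => ‖Y ω‖ ^ 2) μ := by
    refine (integrable_const ((ℓ * D) ^ 2)).mono'
      (hYint.aestronglyMeasurable.norm.pow 2) ?_
    filter_upwards [hYbd] with ω hω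
    show ‖‖Y ω‖ ^ 2‖ ≤ (ℓ * D) ^ 2
    rw [Real.norm_eq_abs, abs_of_nonneg (by positivity)]
    exact pow_le_pow_left₀ (norm_nonneg _) hω 2
  have hY2le : ∫ ω, ‖Y ω‖ ^ 2 ∂μ ≤ ℓ ^ 2 * D ^ 2 := by
    calc ∫ ω, ‖Y ω‖ ^ 2 ∂μ ≤ ∫ _, (ℓ * D) ^ 2 ∂μ := by
          refine integral_mono_ae hY2 (integrable_const _) ?_
          filter_upwards [hYbd] with ω hω
          exact pow_le_pow_left₀ (norm_nonneg _) hω 2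
      _ = (ℓ * D) ^ 2 := by simp
      _ = ℓ ^ 2 * D ^ 2 := by ring
  have hQle : ∫ ω, ‖q ω‖ ^ 2 ∂μ ≤ ℓ ^ 2 * D ^ 2 := by
    have hYin_int : Integrable (fun ω => 2 * (inner ℝ (g - g') (Y ω) : ℝ)) μ :=
      (hYint.const_inner _).const_mul 2
    have hYsub : Integrable (fun ω => ‖Y ω‖ ^ 2 - 2 * (inner ℝ (g - g') (Y ω) : ℝ)) μ :=
      hY2.sub hYin_int
    have hid : ∫ ω, ‖q ω‖ ^ 2 ∂μ
        = (∫ ω, ‖Y ω‖ ^ 2 ∂μ) - ‖g - g'‖ ^ 2 := by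
      have hptq : ∀ ω, ‖q ω‖ ^ 2
          = ‖Y ω‖ ^ 2 - 2 * (inner ℝ (g - g') (Y ω) : ℝ) + ‖g - g'‖ ^ 2 := by
        intro ω
        have h1 : q ω = Y ω - (g - g') := by simp only [hq, hY]
        rw [h1, norm_sub_sq_real, real_inner_comm]
        try ring
      calc ∫ ω, ‖q ω‖ ^ 2 ∂μ
          = ∫ ω, (‖Y ω‖ ^ 2 - 2 * (inner ℝ (g - g') (Y ω) : ℝ) + ‖g - g'‖ ^ 2) ∂μ :=
            integral_congr_ae (Filter.Eventually.of_forall hptq)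
        _ = (∫ ω, ‖Y ω‖ ^ 2 ∂μ) - (∫ ω, 2 * (inner ℝ (g - g') (Y ω) : ℝ) ∂μ)
              + ∫ _, ‖g - g'‖ ^ 2 ∂μ := by
            rw [integral_add hYsub (integrable_const _),
              integral_sub hY2 hYin_int]
        _ = (∫ ω, ‖Y ω‖ ^ 2 ∂μ) - ‖g - g'‖ ^ 2 := by
            rw [integral_const_mul, integral_inner hYint, hYmean,
              real_inner_self_eq_norm_sq, integral_const]
            simp
            try ring
    rw [hid]
    have := sq_nonneg ‖g - g'‖
    linarith
  -- bound on ∫‖w‖²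
  have hQnn : 0 ≤ ∫ ω, ‖q ω‖ ^ 2 ∂μ :=
    integral_nonneg fun ω => by positivity
  have hWnn : 0 ≤ ∫ ω, ‖w ω‖ ^ 2 ∂μ :=
    integral_nonneg fun ω => by positivity
  have hPle : ∫ ω, ‖p ω‖ ^ 2 ∂μ ≤ σ ^ 2 := hG'var
  have hWle : ∫ ω, ‖w ω‖ ^ 2 ∂μ
      ≤ 2 * η ^ 2 * (∫ ω, ‖p ω‖ ^ 2 ∂μ) + 2 * (1 - η) ^ 2 * ∫ ω, ‖q ω‖ ^ 2 ∂μ := by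
    calc ∫ ω, ‖w ω‖ ^ 2 ∂μ
        ≤ ∫ ω, (2 * η ^ 2 * ‖p ω‖ ^ 2 + 2 * (1 - η) ^ 2 * ‖q ω‖ ^ 2) ∂μ := by
          refine integral_mono_ae hw2
            ((hp2.const_mul _).add (hq2.const_mul _))
            (Filter.Eventually.of_forall fun ω => ?_)
          show ‖w ω‖ ^ 2 ≤ 2 * η ^ 2 * ‖p ω‖ ^ 2 + 2 * (1 - η) ^ 2 * ‖q ω‖ ^ 2
          have h1 : ‖w ω‖ ≤ η * ‖p ω‖ + (1 - η) * ‖q ω‖ := by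
            calc ‖w ω‖ ≤ ‖η • (g' - G' ω)‖ + ‖(1 - η) • ((G ω - G' ω) - (g - g'))‖ :=
                  norm_add_le _ _
              _ = η * ‖g' - G' ω‖ + (1 - η) * ‖q ω‖ := by
                  rw [norm_smul, norm_smul, Real.norm_eq_abs, Real.norm_eq_abs,
                    abs_of_pos hη, abs_of_nonneg h1mη]
                  try rfl
              _ = η * ‖p ω‖ + (1 - η) * ‖q ω‖ := by
                  rw [show ‖g' - G' ω‖ = ‖p ω‖ by rw [norm_sub_rev]]
          nlinarith [norm_nonneg (w ω), norm_nonneg (p ω), norm_nonneg (q ω),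
            sq_nonneg (η * ‖p ω‖ - (1 - η) * ‖q ω‖)]
      _ = 2 * η ^ 2 * (∫ ω, ‖p ω‖ ^ 2 ∂μ) + 2 * (1 - η) ^ 2 * ∫ ω, ‖q ω‖ ^ 2 ∂μ := by
          rw [integral_add ((hp2.const_mul _)) ((hq2.const_mul _)),
            integral_const_mul, integral_const_mul]
  -- numeric assembly
  set A : ℝ := ‖u - v‖ with hA
  set V : ℝ := ‖v - g‖ with hV
  set Dg : ℝ := ‖g - g'‖ with hDg
  set W : ℝ := ∫ ω, ‖w ω‖ ^ 2 ∂μ with hWdef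
  have hDgnn : 0 ≤ Dg := norm_nonneg _
  have hDgle : Dg ≤ L * D := by
    rw [hDg, norm_sub_rev, hg, hg']
    exact hlip x' x
  have hcm : c = (u - v) + (η • (v - g) + (g - g')) := by rw [hc]; module
  have hCle : ‖c‖ ≤ A + (η * V + Dg) := by
    rw [hcm]
    calc ‖(u - v) + (η • (v - g) + (g - g'))‖
        ≤ ‖u - v‖ + ‖η • (v - g) + (g - g')‖ := norm_add_le _ _
      _ ≤ A + (‖η • (v - g)‖ + ‖g - g'‖) := by
          rw [hA]
          exact add_le_add le_rfl (norm_add_le _ _)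
      _ = A + (η * V + Dg) := by
          rw [norm_smul, Real.norm_eq_abs, abs_of_pos hη, hV, hDg]
  set B : ℝ := η * V + Dg with hB
  have hBnn : 0 ≤ B := by
    have : 0 ≤ η * V := mul_nonneg hη.le (norm_nonneg _)
    rw [hB]; linarith
  have hηne : η ≠ 0 := ne_of_gt hη
  have hsq1 : (1 - η) ^ 2 ≤ 1 := by
    have hh : η * η ≤ 1 * η := mul_le_mul_of_nonneg_right hη1 hη.le
    have hh2 : (1 - η) ^ 2 = 1 - 2 * η + η * η := by ring
    rw [hh2]
    linarith [hη.le]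
  have h1 : (1 - η) ^ 2 * ‖c‖ ^ 2 ≤ (1 - η) * A ^ 2 + (1 / η) * B ^ 2 := by
    have hAB : ‖c‖ ^ 2 ≤ (A + B) ^ 2 := pow_le_pow_left₀ (norm_nonneg c) hCle 2
    have hcan : η * ((1 / η) * B ^ 2) = B ^ 2 := by field_simp
    have key : η * ((1 - η) ^ 2 * (A + B) ^ 2)
        ≤ η * ((1 - η) * A ^ 2) + (1 - η) ^ 2 * B ^ 2 := by
      linarith [mul_nonneg h1mη (sq_nonneg (η * A - (1 - η) * B))]
    have hBsq : (1 - η) ^ 2 * B ^ 2 ≤ B ^ 2 :=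
      mul_le_of_le_one_left (sq_nonneg B) hsq1
    have step0 : (1 - η) ^ 2 * ‖c‖ ^ 2 ≤ (1 - η) ^ 2 * (A + B) ^ 2 :=
      mul_le_mul_of_nonneg_left hAB (sq_nonneg _)
    have hdiv : (1 - η) ^ 2 * (A + B) ^ 2 ≤ (1 - η) * A ^ 2 + (1 / η) * B ^ 2 := by
      rw [← mul_le_mul_iff_of_pos_left hη, mul_add, hcan]
      linarith [key, hBsq]
    exact step0.trans hdiv
  have h2 : (1 / η) * B ^ 2 ≤ 2 * η * V ^ 2 + 2 * ((1 / η) * (L ^ 2 * D ^ 2)) := by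
    have hVnn : 0 ≤ V := norm_nonneg _
    have hB2 : B ^ 2 ≤ 2 * η ^ 2 * V ^ 2 + 2 * (L ^ 2 * D ^ 2) := by
      have hDg2 : Dg ^ 2 ≤ L ^ 2 * D ^ 2 := by
        have h := pow_le_pow_left₀ hDgnn hDgle 2
        calc Dg ^ 2 ≤ (L * D) ^ 2 := h
          _ = L ^ 2 * D ^ 2 := by ring
      rw [hB]
      linarith [sq_nonneg (η * V - Dg), hDg2]
    have hle := mul_le_mul_of_nonneg_left hB2 (one_div_nonneg.mpr hη.le)
    calc (1 / η) * B ^ 2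
        ≤ (1 / η) * (2 * η ^ 2 * V ^ 2 + 2 * (L ^ 2 * D ^ 2)) := hle
      _ = 2 * η * V ^ 2 + 2 * ((1 / η) * (L ^ 2 * D ^ 2)) := by
          field_simp
  have hW1 : (1 - η) ^ 2 * W ≤ W := mul_le_of_le_one_left hWnn hsq1
  have hW2 : W ≤ 2 * η ^ 2 * σ ^ 2 + 2 * (ℓ ^ 2 * D ^ 2) := by
    have t1 : 2 * η ^ 2 * (∫ ω, ‖p ω‖ ^ 2 ∂μ) ≤ 2 * η ^ 2 * σ ^ 2 :=
      mul_le_mul_of_nonneg_left hPle (by positivity)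
    have t2 : 2 * (1 - η) ^ 2 * (∫ ω, ‖q ω‖ ^ 2 ∂μ) ≤ 2 * (ℓ ^ 2 * D ^ 2) := by
      calc 2 * (1 - η) ^ 2 * (∫ ω, ‖q ω‖ ^ 2 ∂μ)
          ≤ 2 * 1 * (∫ ω, ‖q ω‖ ^ 2 ∂μ) := by
            apply mul_le_mul_of_nonneg_right _ hQnn
            linarith [hsq1]
        _ ≤ 2 * (ℓ ^ 2 * D ^ 2) := by
            rw [mul_one]
            linarith
    linarith [hWle]
  rw [hLHS]
  have hexp : 2 * (ℓ ^ 2 + (2 / η) * L ^ 2) * D ^ 2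
      = 2 * (ℓ ^ 2 * D ^ 2) + 4 * ((1 / η) * (L ^ 2 * D ^ 2)) := by
    field_simp
    ring
  have hVnn2 : 0 ≤ η * V ^ 2 := by positivity
  have hLD : 0 ≤ (1 / η) * (L ^ 2 * D ^ 2) := by positivity
  rw [mul_add, hexp]
  linarith [h1, h2, hW1, hW2]
end
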